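/- arXiv:2305.04494 — 3 statements merged into one kernel-verified Lean document; each statement's English description precedes it below -/
import Mathlib

section
/- Let 0 ≤ θ < π/2, let A and B be n×n complex matrices in the sector class S_θ, let 0 < m ≤ M be real numbers with mI ≤ ℜA ≤ MI and mI ≤ ℜB ≤ MI (Loewner order), let v ∈ [0,1], and let Φ be a positive unital linear map on M_n(ℂ). Then cos²θ · Φ(ℜ(A∇_vB)) + mM · (Φ(ℜ(A!_vB)))⁻¹ ≤ (M+m)·I in the Loewner order. (This is the arithmetic–harmonic instance σ₁ = ∇_v, σ₂ = !_v of the paper's Proposition on means between σ and σ*.) -/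
open Matrix
open scoped ComplexOrder

/-- The real part `(A + Aᴴ)/2` of a complex matrix. -/
noncomputable def matRe {n : ℕ} (A : Matrix (Fin n) (Fin n) ℂ) : Matrix (Fin n) (Fin n) ℂ :=
  (2⁻¹ : ℂ) • (A + Aᴴ)

/-- The imaginary part `(A - Aᴴ)/(2i)` of a complex matrix. -/
noncomputable def matIm {n : ℕ} (A : Matrix (Fin n) (Fin n) ℂ) : Matrix (Fin n) (Fin n) ℂ :=
  (2 * Complex.I)⁻¹ • (A - Aᴴ)

/-- Loewner order: `Y - X` is positive semidefinite. -/
def loewnerLE {n : ℕ} (X Y : Matrix (Fin n) (Fin n) ℂ) : Prop := (Y - X).PosSemidef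

/-- `A` lies in the sector class `S_θ`: its real part is positive definite and for all `x`,
`|⟨(ℑA)x, x⟩| ≤ tan θ · ⟨(ℜA)x, x⟩`. -/
def sectorClass {n : ℕ} (θ : ℝ) (A : Matrix (Fin n) (Fin n) ℂ) : Prop :=
  (matRe A).PosDef ∧
    ∀ x : Fin n → ℂ,
      |(star x ⬝ᵥ (matIm A).mulVec x).re| ≤ Real.tan θ * (star x ⬝ᵥ (matRe A).mulVec x).re

/-- The `v`-weighted arithmetic mean `A ∇_v B = v A + (1 - v) B`. -/
noncomputable def amean {n : ℕ} (v : ℝ) (A B : Matrix (Fin n) (Fin n) ℂ) :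
    Matrix (Fin n) (Fin n) ℂ :=
  (v : ℂ) • A + ((1 - v : ℝ) : ℂ) • B

/-- The `v`-weighted harmonic mean `A !_v B = (v A⁻¹ + (1 - v) B⁻¹)⁻¹`. -/
noncomputable def hmean {n : ℕ} (v : ℝ) (A B : Matrix (Fin n) (Fin n) ℂ) :
    Matrix (Fin n) (Fin n) ℂ :=
  ((v : ℂ) • A⁻¹ + ((1 - v : ℝ) : ℂ) • B⁻¹)⁻¹

/-- A linear map on matrices is positive and unital. -/
def IsPosUnitalMap {n : ℕ}
    (Φ : Matrix (Fin n) (Fin n) ℂ →ₗ[ℂ] Matrix (Fin n) (Fin n) ℂ) : Prop :=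
  Φ 1 = 1 ∧ ∀ X : Matrix (Fin n) (Fin n) ℂ, X.PosSemidef → (Φ X).PosSemidef

/-- The numerical radius `ω(A) = sup { |⟨Ax, x⟩| : ‖x‖ = 1 }` (ℓ² norm). -/
noncomputable def numRadius {n : ℕ} (A : Matrix (Fin n) (Fin n) ℂ) : ℝ :=
  sSup {r : ℝ | ∃ x : EuclideanSpace ℂ (Fin n), ‖x‖ = 1 ∧
    r = ‖star (x : Fin n → ℂ) ⬝ᵥ A.mulVec (x : Fin n → ℂ)‖}

/-- The spectral norm (ℓ² → ℓ² operator norm) of a matrix. -/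
noncomputable def matSpectralNorm {n : ℕ} (A : Matrix (Fin n) (Fin n) ℂ) : ℝ :=
  ‖Matrix.toEuclideanCLM (𝕜 := ℂ) A‖


namespace SectorAux
open Matrix
variable {n : ℕ}

lemma form_conjTranspose (A : Matrix (Fin n) (Fin n) ℂ) (x y : Fin n → ℂ) :
    star x ⬝ᵥ Aᴴ *ᵥ y = star (star y ⬝ᵥ A *ᵥ x) := by
  rw [star_dotProduct, star_mulVec, conjTranspose_conjTranspose, dotProduct_mulVec]

lemma conj_form {Q : Matrix (Fin n) (Fin n) ℂ} (hQ : Q.IsHermitian) (a b : Fin n → ℂ) :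
    star b ⬝ᵥ Q *ᵥ a = star (star a ⬝ᵥ Q *ᵥ b) := by
  conv_lhs => rw [← hQ]
  exact form_conjTranspose Q b a

lemma herm_im {Q : Matrix (Fin n) (Fin n) ℂ} (hQ : Q.IsHermitian) (x : Fin n → ℂ) :
    (star x ⬝ᵥ Q *ᵥ x).im = 0 := by
  have h := conj_form hQ x x
  have h2 := congrArg Complex.im h
  simp only [Complex.star_def, Complex.conj_im] at h2
  linarith

lemma posSemidef_mk {H : Matrix (Fin n) (Fin n) ℂ} (hH : H.IsHermitian)
    (h : ∀ x, 0 ≤ (star x ⬝ᵥ H *ᵥ x).re) : H.PosSemidef := by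
  refine Matrix.PosSemidef.of_dotProduct_mulVec_nonneg hH fun x => ?_
  rw [Complex.le_def]
  exact ⟨by simpa using h x, by simpa using (herm_im hH x).symm⟩

lemma psd_re {H : Matrix (Fin n) (Fin n) ℂ} (hH : H.PosSemidef) (x : Fin n → ℂ) :
    0 ≤ (star x ⬝ᵥ H *ᵥ x).re := by
  have := hH.dotProduct_mulVec_nonneg x
  rw [Complex.le_def] at this
  simpa using this.1

lemma posDef_mk {H : Matrix (Fin n) (Fin n) ℂ} (hH : H.IsHermitian)
    (h : ∀ x, x ≠ 0 → 0 < (star x ⬝ᵥ H *ᵥ x).re) : H.PosDef := by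
  refine Matrix.PosDef.of_dotProduct_mulVec_pos hH fun x hx => ?_
  rw [Complex.lt_def]
  exact ⟨by simpa using h x hx, by simpa using (herm_im hH x).symm⟩

lemma pd_re {H : Matrix (Fin n) (Fin n) ℂ} (hH : H.PosDef) {x : Fin n → ℂ} (hx : x ≠ 0) :
    0 < (star x ⬝ᵥ H *ᵥ x).re := by
  have := hH.dotProduct_mulVec_pos hx
  rw [Complex.lt_def] at this
  simpa using this.1

lemma psd_rsmul {X : Matrix (Fin n) (Fin n) ℂ} (hX : X.PosSemidef) {r : ℝ} (hr : 0 ≤ r) :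
    (((r : ℂ)) • X).PosSemidef := by
  refine posSemidef_mk ?_ fun x => ?_
  · unfold Matrix.IsHermitian
    rw [conjTranspose_smul, hX.1]
    congr 1
    simp [Complex.star_def]
  · rw [smul_mulVec, dotProduct_smul, smul_eq_mul, Complex.re_ofReal_mul]
    exact mul_nonneg hr (psd_re hX x)

lemma pd_combo {X Y : Matrix (Fin n) (Fin n) ℂ} (hX : X.PosDef) (hY : Y.PosDef) {v : ℝ}
    (h0 : 0 ≤ v) (h1 : v ≤ 1) : ((v : ℂ) • X + ((1 - v : ℝ) : ℂ) • Y).PosDef := by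
  refine posDef_mk ?_ fun x hx => ?_
  · unfold Matrix.IsHermitian
    rw [conjTranspose_add, conjTranspose_smul, conjTranspose_smul, hX.1, hY.1]
    congr 1 <;> simp [Complex.star_def]
  · have ha := pd_re hX hx
    have hb := pd_re hY hx
    rw [add_mulVec, dotProduct_add, smul_mulVec, smul_mulVec, dotProduct_smul,
      dotProduct_smul, smul_eq_mul, smul_eq_mul, Complex.add_re, Complex.re_ofReal_mul,
      Complex.re_ofReal_mul]
    rcases le_total ((star x ⬝ᵥ X *ᵥ x).re) ((star x ⬝ᵥ Y *ᵥ x).re) with h | h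
    · nlinarith
    · nlinarith

lemma pd_conj {X : Matrix (Fin n) (Fin n) ℂ} (hX : X.PosDef) {N : Matrix (Fin n) (Fin n) ℂ}
    (hN : IsUnit N.det) : (N * X * Nᴴ).PosDef := by
  have hNH : IsUnit Nᴴ.det := by
    rw [det_conjTranspose]; exact hN.star
  refine Matrix.PosDef.of_dotProduct_mulVec_pos (hX.posSemidef.mul_mul_conjTranspose_same N).1 fun x hx => ?_
  have hy : Nᴴ *ᵥ x ≠ 0 := by
    intro h
    apply hx
    have : Nᴴ⁻¹ *ᵥ (Nᴴ *ᵥ x) = x := by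
      rw [mulVec_mulVec, Matrix.nonsing_inv_mul _ hNH, one_mulVec]
    rw [h, mulVec_zero] at this
    exact this.symm
  have : star x ⬝ᵥ (N * X * Nᴴ) *ᵥ x = star (Nᴴ *ᵥ x) ⬝ᵥ X *ᵥ (Nᴴ *ᵥ x) := by
    rw [star_mulVec, conjTranspose_conjTranspose, ← dotProduct_mulVec, mulVec_mulVec,
      mulVec_mulVec, Matrix.mul_assoc]
  rw [this]
  exact hX.dotProduct_mulVec_pos hy

lemma accretive_isUnit {A : Matrix (Fin n) (Fin n) ℂ} (hA : (matRe A).PosDef) :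
    IsUnit A.det := by
  rw [isUnit_iff_ne_zero]
  intro hdet
  obtain ⟨x, hx0, hx⟩ := (Matrix.exists_mulVec_eq_zero_iff).mpr hdet
  have hform : star x ⬝ᵥ (matRe A) *ᵥ x = 0 := by
    unfold matRe
    rw [smul_mulVec, dotProduct_smul, add_mulVec, dotProduct_add,
      form_conjTranspose, hx, dotProduct_zero]
    simp
  have := hA.dotProduct_mulVec_pos hx0
  rw [hform] at this
  exact lt_irrefl _ this

lemma matRe_isHermitian (A : Matrix (Fin n) (Fin n) ℂ) : (matRe A).IsHermitian := by
  unfold matRe Matrix.IsHermitian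
  rw [conjTranspose_smul, conjTranspose_add, conjTranspose_conjTranspose]
  congr 1
  · simp [Complex.star_def]
  · exact add_comm _ _

lemma matRe_add (X Y : Matrix (Fin n) (Fin n) ℂ) : matRe (X + Y) = matRe X + matRe Y := by
  unfold matRe
  rw [conjTranspose_add, ← smul_add]
  congr 1
  abel

lemma matRe_rsmul (r : ℝ) (X : Matrix (Fin n) (Fin n) ℂ) :
    matRe ((r : ℂ) • X) = (r : ℂ) • matRe X := by
  unfold matRe
  rw [conjTranspose_smul, Complex.star_def, Complex.conj_ofReal, ← smul_add, smul_comm]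

lemma matRe_inv {T : Matrix (Fin n) (Fin n) ℂ} (hT : IsUnit T.det) :
    matRe T⁻¹ = T⁻¹ * matRe T * (T⁻¹)ᴴ := by
  have hTH : IsUnit Tᴴ.det := by rw [det_conjTranspose]; exact hT.star
  unfold matRe
  rw [conjTranspose_nonsing_inv]
  rw [Matrix.mul_smul, Matrix.smul_mul]
  congr 1
  rw [Matrix.mul_add, Matrix.add_mul, Matrix.nonsing_inv_mul _ hT, Matrix.one_mul,
    Matrix.mul_assoc T⁻¹ Tᴴ Tᴴ⁻¹, Matrix.mul_nonsing_inv _ hTH, Matrix.mul_one]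
  exact add_comm _ _

lemma q3core {Q : Matrix (Fin n) (Fin n) ℂ} (hQ : Q.PosSemidef) (a b : Fin n → ℂ) :
    2 * (star a ⬝ᵥ Q *ᵥ b).re ≤ (star a ⬝ᵥ Q *ᵥ a).re + (star b ⬝ᵥ Q *ᵥ b).re := by
  have h0 := psd_re hQ (a - b)
  have hexp : star (a - b) ⬝ᵥ Q *ᵥ (a - b) =
      star a ⬝ᵥ Q *ᵥ a - star a ⬝ᵥ Q *ᵥ b - (star b ⬝ᵥ Q *ᵥ a - star b ⬝ᵥ Q *ᵥ b) := by
    rw [star_sub, mulVec_sub, sub_dotProduct, dotProduct_sub, dotProduct_sub]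
  have hc := congrArg Complex.re (conj_form hQ.1 a b)
  simp only [Complex.star_def, Complex.conj_re] at hc
  rw [hexp] at h0
  simp only [Complex.sub_re] at h0
  linarith


lemma smul_form (r s : ℝ) (Q : Matrix (Fin n) (Fin n) ℂ) (a b : Fin n → ℂ) :
    star ((r : ℂ) • a) ⬝ᵥ Q *ᵥ ((s : ℂ) • b) = ((r * s : ℝ) : ℂ) * (star a ⬝ᵥ Q *ᵥ b) := by
  rw [star_smul, mulVec_smul, smul_dotProduct, dotProduct_smul]
  push_cast
  simp only [Complex.star_def, Complex.conj_ofReal, smul_eq_mul]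
  ring

lemma q3scaled {Q : Matrix (Fin n) (Fin n) ℂ} (hQ : Q.PosSemidef) {t : ℝ} (ht : 0 < t)
    (a b : Fin n → ℂ) :
    2 * (star a ⬝ᵥ Q *ᵥ b).re ≤
      t * (star a ⬝ᵥ Q *ᵥ a).re + t⁻¹ * (star b ⬝ᵥ Q *ᵥ b).re := by
  have hs : (0:ℝ) < Real.sqrt t := Real.sqrt_pos.mpr ht
  have h := q3core hQ ((Real.sqrt t : ℂ) • a) (((Real.sqrt t)⁻¹ : ℝ) • b)
  rw [show ((Real.sqrt t)⁻¹ : ℝ) • b = (((Real.sqrt t)⁻¹ : ℝ) : ℂ) • b by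
        funext i; simp [Complex.real_smul]] at h
  rw [smul_form, smul_form, smul_form] at h
  rw [Real.mul_self_sqrt ht.le, mul_inv_cancel₀ (ne_of_gt hs),
    show (Real.sqrt t)⁻¹ * (Real.sqrt t)⁻¹ = t⁻¹ by
      rw [← mul_inv]; rw [Real.mul_self_sqrt ht.le]] at h
  simp only [Complex.re_ofReal_mul, Complex.ofReal_one, one_mul] at h
  linarith

lemma pd_isUnit_det {S : Matrix (Fin n) (Fin n) ℂ} (hS : S.PosDef) : IsUnit S.det :=
  (Matrix.isUnit_iff_isUnit_det S).mp hS.isUnit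

/-- `star (S⁻¹ *ᵥ x) ⬝ᵥ y = star x ⬝ᵥ S⁻¹ *ᵥ y` for Hermitian S. -/
lemma star_inv_mulVec_dot {S : Matrix (Fin n) (Fin n) ℂ} (hS : S.IsHermitian)
    (x y : Fin n → ℂ) : star (S⁻¹ *ᵥ x) ⬝ᵥ y = star x ⬝ᵥ S⁻¹ *ᵥ y := by
  rw [star_mulVec, hS.inv.eq, ← dotProduct_mulVec]

/-- Variational inequality: `2 Re⟨z, x⟩ ≤ z*Sz + x*S⁻¹x` for `S` positive definite. -/
lemma lemV {S : Matrix (Fin n) (Fin n) ℂ} (hS : S.PosDef) (z x : Fin n → ℂ) :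
    2 * (star z ⬝ᵥ x).re ≤ (star z ⬝ᵥ S *ᵥ z).re + (star x ⬝ᵥ S⁻¹ *ᵥ x).re := by
  have hdet := pd_isUnit_det hS
  have h := q3core hS.posSemidef z (S⁻¹ *ᵥ x)
  have hcross : S *ᵥ (S⁻¹ *ᵥ x) = x := by
    rw [mulVec_mulVec, Matrix.mul_nonsing_inv _ hdet, one_mulVec]
  rw [hcross, star_inv_mulVec_dot hS.1] at h
  exact h

/-- At the optimum `z = S⁻¹ x` the variational bound is attained. -/
lemma inv_form_eq {S : Matrix (Fin n) (Fin n) ℂ} (hS : S.PosDef) (x : Fin n → ℂ) :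
    (star x ⬝ᵥ S⁻¹ *ᵥ x).re
      = 2 * (star (S⁻¹ *ᵥ x) ⬝ᵥ x).re - (star (S⁻¹ *ᵥ x) ⬝ᵥ S *ᵥ (S⁻¹ *ᵥ x)).re := by
  have hdet := pd_isUnit_det hS
  have hcross : S *ᵥ (S⁻¹ *ᵥ x) = x := by
    rw [mulVec_mulVec, Matrix.mul_nonsing_inv _ hdet, one_mulVec]
  rw [hcross, star_inv_mulVec_dot hS.1]
  ring

lemma inv_antitone {S T : Matrix (Fin n) (Fin n) ℂ} (hS : S.PosDef) (hT : T.PosDef)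
    (hST : (T - S).PosSemidef) : (S⁻¹ - T⁻¹).PosSemidef := by
  refine posSemidef_mk (hS.1.inv.sub hT.1.inv) fun x => ?_
  set z := T⁻¹ *ᵥ x with hz
  have h1 := inv_form_eq hT x
  have h2 : (star z ⬝ᵥ T *ᵥ z).re = (star z ⬝ᵥ S *ᵥ z).re + (star z ⬝ᵥ (T - S) *ᵥ z).re := by
    rw [sub_mulVec, dotProduct_sub, Complex.sub_re]; ring
  have h3 := psd_re hST z
  have h4 := lemV hS z x
  have h5 : star x ⬝ᵥ (S⁻¹ - T⁻¹) *ᵥ x = star x ⬝ᵥ S⁻¹ *ᵥ x - star x ⬝ᵥ T⁻¹ *ᵥ x := by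
    rw [sub_mulVec, dotProduct_sub]
  rw [h5, Complex.sub_re]
  linarith

lemma eigvec_norm1 {R : Matrix (Fin n) (Fin n) ℂ} (hH : R.IsHermitian) (i : Fin n) :
    star ⇑(hH.eigenvectorBasis i) ⬝ᵥ ⇑(hH.eigenvectorBasis i) = 1 := by
  have h := hH.eigenvectorBasis.orthonormal.1 i
  have h2 : (inner ℂ (hH.eigenvectorBasis i) (hH.eigenvectorBasis i) : ℂ) = 1 := by
    rw [inner_self_eq_norm_sq_to_K, h]; norm_num
  rw [EuclideanSpace.inner_eq_star_dotProduct] at h2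
  simpa [dotProduct_comm] using h2

lemma eigvec_form {R : Matrix (Fin n) (Fin n) ℂ} (hH : R.IsHermitian) (i : Fin n) :
    star ⇑(hH.eigenvectorBasis i) ⬝ᵥ R *ᵥ ⇑(hH.eigenvectorBasis i) = (hH.eigenvalues i : ℂ) := by
  rw [hH.mulVec_eigenvectorBasis, RCLike.real_smul_eq_coe_smul (K := ℂ), dotProduct_smul,
    eigvec_norm1 hH i, smul_eq_mul, mul_one]
  rfl

lemma eig_lb {R : Matrix (Fin n) (Fin n) ℂ} (hH : R.IsHermitian) {m : ℝ}
    (h1 : (R - (m : ℂ) • 1).PosSemidef) (i : Fin n) : m ≤ hH.eigenvalues i := by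
  have h := psd_re h1 ⇑(hH.eigenvectorBasis i)
  rw [sub_mulVec, dotProduct_sub, smul_mulVec, one_mulVec, dotProduct_smul,
    eigvec_form hH i, eigvec_norm1 hH i, smul_eq_mul, mul_one, Complex.sub_re,
    Complex.ofReal_re, Complex.ofReal_re] at h
  linarith

lemma eig_ub {R : Matrix (Fin n) (Fin n) ℂ} (hH : R.IsHermitian) {M : ℝ}
    (h2 : ((M : ℂ) • 1 - R).PosSemidef) (i : Fin n) : hH.eigenvalues i ≤ M := by
  have h := psd_re h2 ⇑(hH.eigenvectorBasis i)
  rw [sub_mulVec, dotProduct_sub, smul_mulVec, one_mulVec, dotProduct_smul,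
    eigvec_form hH i, eigvec_norm1 hH i, smul_eq_mul, mul_one, Complex.sub_re,
    Complex.ofReal_re, Complex.ofReal_re] at h
  linarith

lemma diag_sum (f : Fin n → ℂ) :
    diagonal f = ∑ i, f i • diagonal (fun j => if j = i then (1:ℂ) else 0) := by
  ext j k
  rw [Matrix.sum_apply]
  by_cases h : j = k
  · subst h
    simp [Matrix.diagonal_apply_eq, Matrix.smul_apply]
  · simp [Matrix.diagonal_apply_ne _ h, Matrix.smul_apply]

lemma conj_diag_sum (U0 : Matrix (Fin n) (Fin n) ℂ) (f : Fin n → ℂ) :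
    U0 * diagonal f * star U0
      = ∑ i, f i • (U0 * diagonal (fun j => if j = i then (1:ℂ) else 0) * star U0) := by
  conv_lhs => rw [diag_sum f]
  rw [Matrix.mul_sum, Matrix.sum_mul]
  congr 1
  funext i
  rw [mul_smul_comm, smul_mul_assoc]

lemma spec_decomp {Z : Matrix (Fin n) (Fin n) ℂ} (hZ : Z.PosDef) :
    ∃ E : Fin n → Matrix (Fin n) (Fin n) ℂ, (∀ i, (E i).PosSemidef) ∧ (∑ i, E i) = 1 ∧
      Z = ∑ i, ((hZ.1.eigenvalues i : ℝ) : ℂ) • E i ∧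
      Z⁻¹ = ∑ i, (((hZ.1.eigenvalues i)⁻¹ : ℝ) : ℂ) • E i := by
  classical
  set U : Matrix (Fin n) (Fin n) ℂ := ↑(hZ.1.eigenvectorUnitary) with hU
  have hUU : U * star U = 1 := (Matrix.mem_unitaryGroup_iff).mp (hZ.1.eigenvectorUnitary).2
  have hU'U : star U * U = 1 := (Matrix.mem_unitaryGroup_iff').mp (hZ.1.eigenvectorUnitary).2
  set E : Fin n → Matrix (Fin n) (Fin n) ℂ :=
    fun i => U * diagonal (fun j => if j = i then (1:ℂ) else 0) * star U with hE
  have hEpsd : ∀ i, (E i).PosSemidef := by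
    intro i
    have hd : (diagonal (fun j => if j = i then (1:ℂ) else 0)).PosSemidef := by
      rw [Matrix.posSemidef_diagonal_iff]
      intro j
      split <;> simp
    have := hd.mul_mul_conjTranspose_same U
    rwa [← Matrix.star_eq_conjTranspose] at this
  have hEsum : (∑ i, E i) = 1 := by
    rw [hE]
    have h1 : ∀ i : Fin n, U * diagonal (fun j => if j = i then (1:ℂ) else 0) * star U
        = (1 : ℂ) • (U * diagonal (fun j => if j = i then (1:ℂ) else 0) * star U) := by
      intro i; rw [one_smul]
    have := (conj_diag_sum U (fun _ => (1:ℂ))).symm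
    simp only [one_smul] at this
    rw [this, diagonal_one, Matrix.mul_one, hUU]
  have hspec : Z = U * diagonal (RCLike.ofReal ∘ hZ.1.eigenvalues) * star U :=
    hZ.1.spectral_theorem
  have hcoe : (RCLike.ofReal ∘ hZ.1.eigenvalues : Fin n → ℂ)
      = fun i => ((hZ.1.eigenvalues i : ℝ) : ℂ) := rfl
  have hzdec : Z = ∑ i, ((hZ.1.eigenvalues i : ℝ) : ℂ) • E i := by
    conv_lhs => rw [hspec]
    exact conj_diag_sum U _
  have hne : ∀ i, ((hZ.1.eigenvalues i : ℝ) : ℂ) ≠ 0 := by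
    intro i
    have := hZ.eigenvalues_pos i
    simp only [ne_eq, Complex.ofReal_eq_zero]
    linarith
  have hinv : Z⁻¹ = U * diagonal (fun i => (((hZ.1.eigenvalues i)⁻¹ : ℝ) : ℂ)) * star U := by
    apply Matrix.inv_eq_right_inv
    conv_lhs => lhs; rw [hspec]
    have : (U * diagonal (RCLike.ofReal ∘ hZ.1.eigenvalues) * star U) *
        (U * diagonal (fun i => (((hZ.1.eigenvalues i)⁻¹ : ℝ) : ℂ)) * star U)
        = U * (diagonal (RCLike.ofReal ∘ hZ.1.eigenvalues) * ((star U * U) *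
            diagonal (fun i => (((hZ.1.eigenvalues i)⁻¹ : ℝ) : ℂ)))) * star U := by
      noncomm_ring
    rw [this, hU'U, Matrix.one_mul, diagonal_mul_diagonal, hcoe]
    have : (fun i => ((hZ.1.eigenvalues i : ℝ) : ℂ) * (((hZ.1.eigenvalues i)⁻¹ : ℝ) : ℂ))
        = fun _ => (1:ℂ) := by
      funext i
      rw [← Complex.ofReal_mul]
      rw [mul_inv_cancel₀ (by have := hZ.eigenvalues_pos i; positivity)]
      norm_num
    rw [this, diagonal_one, Matrix.mul_one, hUU]
  have hzidec : Z⁻¹ = ∑ i, (((hZ.1.eigenvalues i)⁻¹ : ℝ) : ℂ) • E i := by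
    rw [hinv, conj_diag_sum U _]
  exact ⟨E, hEpsd, hEsum, hzdec, hzidec⟩

lemma psd_sum {E : Fin n → Matrix (Fin n) (Fin n) ℂ} (h : ∀ i, (E i).PosSemidef) :
    (∑ i, E i).PosSemidef := by
  classical
  refine Finset.sum_induction E Matrix.PosSemidef (fun a b ha hb => ha.add hb)
    Matrix.PosSemidef.zero (fun i _ => h i)

lemma form_sum (x y : Fin n → ℂ) (M : Fin n → Matrix (Fin n) (Fin n) ℂ) :
    star x ⬝ᵥ (∑ i, M i) *ᵥ y = ∑ i, star x ⬝ᵥ (M i) *ᵥ y := by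
  have h1 : (∑ i, M i) *ᵥ y = ∑ i, (M i) *ᵥ y := by
    ext j
    simp [Matrix.mulVec, dotProduct, Matrix.sum_apply, Finset.sum_mul]
    rw [Finset.sum_comm]
  rw [h1]
  simp [dotProduct, Finset.mul_sum, Finset.sum_apply]
  rw [Finset.sum_comm]

lemma form_csmul (c : ℂ) (M : Matrix (Fin n) (Fin n) ℂ) (x y : Fin n → ℂ) :
    star x ⬝ᵥ (c • M) *ᵥ y = c * (star x ⬝ᵥ M *ᵥ y) := by
  rw [smul_mulVec, dotProduct_smul, smul_eq_mul]

/-- Existence form of the spectral decomposition with eigenvalue bounds. -/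
lemma spec_decomp' {Z : Matrix (Fin n) (Fin n) ℂ} (hZ : Z.PosDef) :
    ∃ (lam : Fin n → ℝ) (E : Fin n → Matrix (Fin n) (Fin n) ℂ),
      (∀ i, 0 < lam i) ∧ (∀ i, (E i).PosSemidef) ∧ (∑ i, E i) = 1 ∧
      Z = ∑ i, ((lam i : ℝ) : ℂ) • E i ∧
      Z⁻¹ = ∑ i, (((lam i)⁻¹ : ℝ) : ℂ) • E i ∧
      (∀ μ : ℝ, (Z - (μ : ℂ) • 1).PosSemidef → ∀ i, μ ≤ lam i) ∧
      (∀ μ : ℝ, ((μ : ℂ) • 1 - Z).PosSemidef → ∀ i, lam i ≤ μ) := by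
  obtain ⟨E, hE, hsum, hz, hzi⟩ := spec_decomp hZ
  exact ⟨hZ.1.eigenvalues, E, hZ.eigenvalues_pos, hE, hsum, hz, hzi,
    fun μ h i => eig_lb hZ.1 h i, fun μ h i => eig_ub hZ.1 h i⟩

lemma spec_TA {R : Matrix (Fin n) (Fin n) ℂ} (hR : R.PosDef) {m M : ℝ} (hm : 0 < m)
    (h1 : (R - (m : ℂ) • 1).PosSemidef) (h2 : ((M : ℂ) • 1 - R).PosSemidef) :
    (((M + m : ℝ) : ℂ) • (1 : Matrix (Fin n) (Fin n) ℂ) - R - ((m * M : ℝ) : ℂ) • R⁻¹).PosSemidef := by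
  obtain ⟨lam, E, hpos, hE, hsum, hz, hzi, hlb, hub⟩ := spec_decomp' hR
  have hlb' := hlb m h1
  have hub' := hub M h2
  have key : ((M + m : ℝ) : ℂ) • (1 : Matrix (Fin n) (Fin n) ℂ) - R - ((m * M : ℝ) : ℂ) • R⁻¹
      = ∑ i, ((M + m - lam i - m * M * (lam i)⁻¹ : ℝ) : ℂ) • E i := by
    rw [hzi, hz, ← hsum, Finset.smul_sum, Finset.smul_sum, ← Finset.sum_sub_distrib,
      ← Finset.sum_sub_distrib]
    congr 1
    funext i
    rw [smul_smul, ← sub_smul, ← sub_smul]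
    congr 1
    push_cast
    ring
  rw [key]
  apply psd_sum
  intro i
  apply psd_rsmul (hE i)
  have h3 : 0 ≤ (M - lam i) * (lam i - m) := mul_nonneg (by linarith [hub' i]) (by linarith [hlb' i])
  have h4 : 0 < lam i := hpos i
  have h6 : lam i * (M + m - lam i - m * M * (lam i)⁻¹) = (M - lam i) * (lam i - m) := by
    field_simp
    ring
  nlinarith [h3, h4, h6]

variable {Φ : Matrix (Fin n) (Fin n) ℂ →ₗ[ℂ] Matrix (Fin n) (Fin n) ℂ}

lemma Phi_pd (hΦ1 : Φ 1 = 1) (hΦ2 : ∀ X : Matrix (Fin n) (Fin n) ℂ, X.PosSemidef → (Φ X).PosSemidef)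
    {Z : Matrix (Fin n) (Fin n) ℂ} (hZ : Z.PosDef) : (Φ Z).PosDef := by
  obtain ⟨lam, E, hpos, hE, hsum, hz, hzi, _, _⟩ := spec_decomp' hZ
  have hQ : ∀ i, (Φ (E i)).PosSemidef := fun i => hΦ2 _ (hE i)
  have hQsum : ∑ i, Φ (E i) = 1 := by rw [← map_sum, hsum, hΦ1]
  have hPZ : Φ Z = ∑ i, ((lam i : ℝ) : ℂ) • Φ (E i) := by
    rw [hz, map_sum]
    simp only [_root_.map_smul]
  refine posDef_mk (hΦ2 Z hZ.posSemidef).1 fun x hx => ?_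
  have hform : (star x ⬝ᵥ Φ Z *ᵥ x).re = ∑ i, lam i * (star x ⬝ᵥ Φ (E i) *ᵥ x).re := by
    rw [hPZ, form_sum]
    rw [Complex.re_sum]
    congr 1
    funext i
    rw [form_csmul, Complex.re_ofReal_mul]
  have htot : ∑ i, (star x ⬝ᵥ Φ (E i) *ᵥ x).re = (star x ⬝ᵥ x).re := by
    rw [← Complex.re_sum, ← form_sum, hQsum, one_mulVec]
  have hxx : 0 < (star x ⬝ᵥ x).re := by
    have h := pd_re (Matrix.PosDef.one (R := ℂ) (n := Fin n)) hx
    rwa [one_mulVec] at h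
  have hex : ∃ j ∈ Finset.univ, 0 < lam j * (star x ⬝ᵥ Φ (E j) *ᵥ x).re := by
    by_contra hc
    push_neg at hc
    have hall : ∀ j, (star x ⬝ᵥ Φ (E j) *ᵥ x).re = 0 := by
      intro j
      have h1 := psd_re (hQ j) x
      have h2 := hc j (Finset.mem_univ j)
      have h3 := hpos j
      nlinarith
    rw [Finset.sum_congr rfl (fun j _ => hall j), Finset.sum_const_zero] at htot
    linarith
  rw [hform]
  exact Finset.sum_pos' (fun i _ => mul_nonneg (hpos i).le (psd_re (hQ i) x)) hex

lemma choi (hΦ1 : Φ 1 = 1) (hΦ2 : ∀ X : Matrix (Fin n) (Fin n) ℂ, X.PosSemidef → (Φ X).PosSemidef)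
    {Z : Matrix (Fin n) (Fin n) ℂ} (hZ : Z.PosDef) : (Φ Z⁻¹ - (Φ Z)⁻¹).PosSemidef := by
  obtain ⟨lam, E, hpos, hE, hsum, hz, hzi, _, _⟩ := spec_decomp' hZ
  have hQ : ∀ i, (Φ (E i)).PosSemidef := fun i => hΦ2 _ (hE i)
  have hQsum : ∑ i, Φ (E i) = 1 := by rw [← map_sum, hsum, hΦ1]
  have hB : (Φ Z).PosDef := Phi_pd hΦ1 hΦ2 hZ
  have hPZ : Φ Z = ∑ i, ((lam i : ℝ) : ℂ) • Φ (E i) := by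
    rw [hz, map_sum]; simp only [_root_.map_smul]
  have hPZi : Φ Z⁻¹ = ∑ i, (((lam i)⁻¹ : ℝ) : ℂ) • Φ (E i) := by
    rw [hzi, map_sum]; simp only [_root_.map_smul]
  refine posSemidef_mk ((hΦ2 _ hZ.inv.posSemidef).1.sub hB.1.inv) fun x => ?_
  set z := (Φ Z)⁻¹ *ᵥ x with hzdef
  have hq4 := inv_form_eq hB x
  have hcross : (star z ⬝ᵥ x).re = ∑ i, (star z ⬝ᵥ Φ (E i) *ᵥ x).re := by
    rw [← Complex.re_sum, ← form_sum, hQsum, one_mulVec]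
  have hzz : (star z ⬝ᵥ Φ Z *ᵥ z).re = ∑ i, lam i * (star z ⬝ᵥ Φ (E i) *ᵥ z).re := by
    rw [hPZ, form_sum, Complex.re_sum]
    congr 1
    funext i
    rw [form_csmul, Complex.re_ofReal_mul]
  have hxx : (star x ⬝ᵥ Φ Z⁻¹ *ᵥ x).re = ∑ i, (lam i)⁻¹ * (star x ⬝ᵥ Φ (E i) *ᵥ x).re := by
    rw [hPZi, form_sum, Complex.re_sum]
    congr 1
    funext i
    rw [form_csmul, Complex.re_ofReal_mul]
  have hsumineq : ∑ i, 2 * (star z ⬝ᵥ Φ (E i) *ᵥ x).re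
      ≤ ∑ i, (lam i * (star z ⬝ᵥ Φ (E i) *ᵥ z).re + (lam i)⁻¹ * (star x ⬝ᵥ Φ (E i) *ᵥ x).re) :=
    Finset.sum_le_sum fun i _ => q3scaled (hQ i) (hpos i) z x
  rw [Finset.sum_add_distrib] at hsumineq
  rw [← Finset.mul_sum, ← hcross, ← hzz, ← hxx] at hsumineq
  have hgoal : (star x ⬝ᵥ (Φ Z⁻¹ - (Φ Z)⁻¹) *ᵥ x).re
      = (star x ⬝ᵥ Φ Z⁻¹ *ᵥ x).re - (star x ⬝ᵥ (Φ Z)⁻¹ *ᵥ x).re := by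
    rw [sub_mulVec, dotProduct_sub, Complex.sub_re]
  rw [hgoal, hq4]
  linarith


lemma conj_form_shift (N : Matrix (Fin n) (Fin n) ℂ) (x u : Fin n → ℂ) :
    star x ⬝ᵥ N *ᵥ u = star (Nᴴ *ᵥ x) ⬝ᵥ u := by
  rw [star_mulVec, conjTranspose_conjTranspose, dotProduct_mulVec]

lemma re_dot_comm (a b : Fin n → ℂ) : (star a ⬝ᵥ b).re = (star b ⬝ᵥ a).re := by
  rw [star_dotProduct]
  simp [Complex.star_def]

/-- Key lemma: the real part of the weighted harmonic mean dominates the weighted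
harmonic mean of the real parts. -/
lemma key_hmean {A B : Matrix (Fin n) (Fin n) ℂ}
    (hRA : (matRe A).PosDef) (hRB : (matRe B).PosDef) {v : ℝ} (h0 : 0 ≤ v) (h1 : v ≤ 1) :
    (matRe (((v : ℂ) • A⁻¹ + ((1 - v : ℝ) : ℂ) • B⁻¹)⁻¹)
      - ((v : ℂ) • (matRe A)⁻¹ + ((1 - v : ℝ) : ℂ) • (matRe B)⁻¹)⁻¹).PosSemidef := by
  have hdetA := accretive_isUnit hRA
  have hdetB := accretive_isUnit hRB
  set P := A⁻¹ with hPdef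
  set Q := B⁻¹ with hQdef
  have hdetP : IsUnit P.det := A.isUnit_nonsing_inv_det hdetA
  have hdetQ : IsUnit Q.det := B.isUnit_nonsing_inv_det hdetB
  have hdetPH : IsUnit Pᴴ.det := by rw [det_conjTranspose]; exact hdetP.star
  have hdetQH : IsUnit Qᴴ.det := by rw [det_conjTranspose]; exact hdetQ.star
  set RP := matRe P with hRPdef
  set RQ := matRe Q with hRQdef
  have hRPeq : RP = P * matRe A * Pᴴ := matRe_inv hdetA
  have hRQeq : RQ = Q * matRe B * Qᴴ := matRe_inv hdetB
  have hRP : RP.PosDef := by rw [hRPeq]; exact pd_conj hRA hdetP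
  have hRQ : RQ.PosDef := by rw [hRQeq]; exact pd_conj hRB hdetQ
  set C := (v : ℂ) • P + ((1 - v : ℝ) : ℂ) • Q with hCdef
  have hRCeq : matRe C = (v : ℂ) • RP + ((1 - v : ℝ) : ℂ) • RQ := by
    rw [hCdef, matRe_add, matRe_rsmul, matRe_rsmul, hRPdef, hRQdef]
  have hRC : (matRe C).PosDef := by rw [hRCeq]; exact pd_combo hRP hRQ h0 h1
  have hdetC : IsUnit C.det := accretive_isUnit hRC
  have hdetCH : IsUnit Cᴴ.det := by rw [det_conjTranspose]; exact hdetC.star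
  set W := (v : ℂ) • (matRe A)⁻¹ + ((1 - v : ℝ) : ℂ) • (matRe B)⁻¹ with hWdef
  have hW : W.PosDef := pd_combo hRA.inv hRB.inv h0 h1
  -- identity (matRe A)⁻¹ = Pᴴ * RP⁻¹ * P
  have hGA : (matRe A)⁻¹ = Pᴴ * RP⁻¹ * P := by
    rw [hRPeq, Matrix.mul_inv_rev, Matrix.mul_inv_rev]
    rw [← Matrix.mul_assoc, ← Matrix.mul_assoc, Matrix.mul_nonsing_inv _ hdetPH,
      Matrix.one_mul, Matrix.mul_assoc, Matrix.nonsing_inv_mul _ hdetP, Matrix.mul_one]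
  have hGB : (matRe B)⁻¹ = Qᴴ * RQ⁻¹ * Q := by
    rw [hRQeq, Matrix.mul_inv_rev, Matrix.mul_inv_rev]
    rw [← Matrix.mul_assoc, ← Matrix.mul_assoc, Matrix.mul_nonsing_inv _ hdetQH,
      Matrix.one_mul, Matrix.mul_assoc, Matrix.nonsing_inv_mul _ hdetQ, Matrix.mul_one]
  have hReCinv : matRe C⁻¹ = C⁻¹ * matRe C * Cᴴ⁻¹ := by
    rw [matRe_inv hdetC, conjTranspose_nonsing_inv]
  refine posSemidef_mk ((matRe_isHermitian _).sub hW.1.inv) fun x => ?_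
  have hw : Cᴴ *ᵥ (Cᴴ⁻¹ *ᵥ x) = x := by
    rw [mulVec_mulVec, Matrix.mul_nonsing_inv _ hdetCH, one_mulVec]
  -- LHS form
  have hLHS : star x ⬝ᵥ (matRe C⁻¹) *ᵥ x = star (Cᴴ⁻¹ *ᵥ x) ⬝ᵥ (matRe C) *ᵥ (Cᴴ⁻¹ *ᵥ x) := by
    rw [hReCinv, ← mulVec_mulVec, ← mulVec_mulVec, conj_form_shift,
      conjTranspose_nonsing_inv, mulVec_mulVec]
  have hRCform : (star (Cᴴ⁻¹ *ᵥ x) ⬝ᵥ (matRe C) *ᵥ (Cᴴ⁻¹ *ᵥ x)).re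
      = v * (star (Cᴴ⁻¹ *ᵥ x) ⬝ᵥ RP *ᵥ (Cᴴ⁻¹ *ᵥ x)).re
        + (1 - v) * (star (Cᴴ⁻¹ *ᵥ x) ⬝ᵥ RQ *ᵥ (Cᴴ⁻¹ *ᵥ x)).re := by
    rw [hRCeq, add_mulVec, dotProduct_add, smul_mulVec, smul_mulVec,
      dotProduct_smul, dotProduct_smul, smul_eq_mul, smul_eq_mul, Complex.add_re,
      Complex.re_ofReal_mul, Complex.re_ofReal_mul]
  -- cross term
  have hCH : Cᴴ = (v : ℂ) • Pᴴ + ((1 - v : ℝ) : ℂ) • Qᴴ := by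
    rw [hCdef, conjTranspose_add, conjTranspose_smul, conjTranspose_smul]
    simp [Complex.star_def, Complex.conj_ofReal]
  have hsplit : ∀ zz ww : Fin n → ℂ, (star zz ⬝ᵥ Cᴴ *ᵥ ww).re
      = v * (star (P *ᵥ zz) ⬝ᵥ ww).re + (1 - v) * (star (Q *ᵥ zz) ⬝ᵥ ww).re := by
    intro zz ww
    conv_lhs => rw [hCH]
    rw [add_mulVec, dotProduct_add, smul_mulVec, smul_mulVec,
      dotProduct_smul, dotProduct_smul, smul_eq_mul, smul_eq_mul, Complex.add_re,
      Complex.re_ofReal_mul, Complex.re_ofReal_mul, conj_form_shift Pᴴ,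
      conj_form_shift Qᴴ, conjTranspose_conjTranspose, conjTranspose_conjTranspose]
  have hcross : (star (W⁻¹ *ᵥ x) ⬝ᵥ x).re
      = v * (star (P *ᵥ (W⁻¹ *ᵥ x)) ⬝ᵥ (Cᴴ⁻¹ *ᵥ x)).re
        + (1 - v) * (star (Q *ᵥ (W⁻¹ *ᵥ x)) ⬝ᵥ (Cᴴ⁻¹ *ᵥ x)).re := by
    have he : star (W⁻¹ *ᵥ x) ⬝ᵥ x = star (W⁻¹ *ᵥ x) ⬝ᵥ Cᴴ *ᵥ (Cᴴ⁻¹ *ᵥ x) := by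
      rw [hw]
    rw [he]
    exact hsplit _ _
  -- quadratic form of W
  have hPart : ∀ (Y R2 : Matrix (Fin n) (Fin n) ℂ) (zz : Fin n → ℂ),
      star zz ⬝ᵥ (Yᴴ * R2 * Y) *ᵥ zz = star (Y *ᵥ zz) ⬝ᵥ R2 *ᵥ (Y *ᵥ zz) := by
    intro Y R2 zz
    rw [← mulVec_mulVec, ← mulVec_mulVec, conj_form_shift Yᴴ, conjTranspose_conjTranspose]
  have hzWz : ∀ zz : Fin n → ℂ, (star zz ⬝ᵥ W *ᵥ zz).re
      = v * (star (P *ᵥ zz) ⬝ᵥ RP⁻¹ *ᵥ (P *ᵥ zz)).re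
        + (1 - v) * (star (Q *ᵥ zz) ⬝ᵥ RQ⁻¹ *ᵥ (Q *ᵥ zz)).re := by
    intro zz
    conv_lhs => rw [hWdef]
    rw [add_mulVec, dotProduct_add, smul_mulVec, smul_mulVec,
      dotProduct_smul, dotProduct_smul, smul_eq_mul, smul_eq_mul, Complex.add_re,
      Complex.re_ofReal_mul, Complex.re_ofReal_mul, hGA, hGB, hPart P RP⁻¹, hPart Q RQ⁻¹]
  have hq4 := inv_form_eq hW x
  -- per-component variational inequalities
  have hA1 : 2 * (star (P *ᵥ (W⁻¹ *ᵥ x)) ⬝ᵥ (Cᴴ⁻¹ *ᵥ x)).re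
      ≤ (star (Cᴴ⁻¹ *ᵥ x) ⬝ᵥ RP *ᵥ (Cᴴ⁻¹ *ᵥ x)).re
        + (star (P *ᵥ (W⁻¹ *ᵥ x)) ⬝ᵥ RP⁻¹ *ᵥ (P *ᵥ (W⁻¹ *ᵥ x))).re := by
    have h := lemV hRP (Cᴴ⁻¹ *ᵥ x) (P *ᵥ (W⁻¹ *ᵥ x))
    rwa [re_dot_comm (Cᴴ⁻¹ *ᵥ x) (P *ᵥ (W⁻¹ *ᵥ x))] at h
  have hB1 : 2 * (star (Q *ᵥ (W⁻¹ *ᵥ x)) ⬝ᵥ (Cᴴ⁻¹ *ᵥ x)).re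
      ≤ (star (Cᴴ⁻¹ *ᵥ x) ⬝ᵥ RQ *ᵥ (Cᴴ⁻¹ *ᵥ x)).re
        + (star (Q *ᵥ (W⁻¹ *ᵥ x)) ⬝ᵥ RQ⁻¹ *ᵥ (Q *ᵥ (W⁻¹ *ᵥ x))).re := by
    have h := lemV hRQ (Cᴴ⁻¹ *ᵥ x) (Q *ᵥ (W⁻¹ *ᵥ x))
    rwa [re_dot_comm (Cᴴ⁻¹ *ᵥ x) (Q *ᵥ (W⁻¹ *ᵥ x))] at h
  have hA2 := mul_le_mul_of_nonneg_left hA1 h0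
  have hB2 := mul_le_mul_of_nonneg_left hB1 (by linarith : (0:ℝ) ≤ 1 - v)
  have hgoal : (star x ⬝ᵥ (matRe C⁻¹ - W⁻¹) *ᵥ x).re
      = (star x ⬝ᵥ (matRe C⁻¹) *ᵥ x).re - (star x ⬝ᵥ W⁻¹ *ᵥ x).re := by
    rw [sub_mulVec, dotProduct_sub, Complex.sub_re]
  rw [hgoal, hLHS, hRCform, hq4, hcross, hzWz (W⁻¹ *ᵥ x)]
  linarith


lemma rsmul_eq (r : ℝ) (X : Matrix (Fin n) (Fin n) ℂ) : r • X = ((r : ℝ) : ℂ) • X := by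
  ext i j
  simp [Matrix.smul_apply, Complex.real_smul]

end SectorAux

theorem stmt0 {n : ℕ} (θ : ℝ) (hθ0 : 0 ≤ θ) (hθ1 : θ < Real.pi / 2)
    (A B : Matrix (Fin n) (Fin n) ℂ)
    (hA : sectorClass θ A) (hB : sectorClass θ B)
    (m M : ℝ) (hm : 0 < m) (hmM : m ≤ M)
    (hmA : loewnerLE (m • (1 : Matrix (Fin n) (Fin n) ℂ)) (matRe A))
    (hAM : loewnerLE (matRe A) (M • (1 : Matrix (Fin n) (Fin n) ℂ)))
    (hmB : loewnerLE (m • (1 : Matrix (Fin n) (Fin n) ℂ)) (matRe B))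
    (hBM : loewnerLE (matRe B) (M • (1 : Matrix (Fin n) (Fin n) ℂ)))
    (v : ℝ) (hv0 : 0 ≤ v) (hv1 : v ≤ 1)
    (Φ : Matrix (Fin n) (Fin n) ℂ →ₗ[ℂ] Matrix (Fin n) (Fin n) ℂ)
    (hΦ : IsPosUnitalMap Φ) :
    loewnerLE
      ((Real.cos θ ^ 2) • Φ (matRe (amean v A B)) +
        (m * M) • (Φ (matRe (hmean v A B)))⁻¹)
      ((M + m) • (1 : Matrix (Fin n) (Fin n) ℂ)) := by
  obtain ⟨hΦ1, hΦ2⟩ := hΦ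
  have hRA : (matRe A).PosDef := hA.1
  have hRB : (matRe B).PosDef := hB.1
  have hM : (0:ℝ) < M := lt_of_lt_of_le hm hmM
  have hmA' : (matRe A - (m : ℂ) • 1).PosSemidef := by
    have h := hmA; unfold loewnerLE at h; rwa [SectorAux.rsmul_eq] at h
  have hAM' : ((M : ℂ) • 1 - matRe A).PosSemidef := by
    have h := hAM; unfold loewnerLE at h; rwa [SectorAux.rsmul_eq] at h
  have hmB' : (matRe B - (m : ℂ) • 1).PosSemidef := by
    have h := hmB; unfold loewnerLE at h; rwa [SectorAux.rsmul_eq] at h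
  have hBM' : ((M : ℂ) • 1 - matRe B).PosSemidef := by
    have h := hBM; unfold loewnerLE at h; rwa [SectorAux.rsmul_eq] at h
  have hTA := SectorAux.spec_TA hRA hm hmA' hAM'
  have hTB := SectorAux.spec_TA hRB hm hmB' hBM'
  set W := (v : ℂ) • (matRe A)⁻¹ + ((1 - v : ℝ) : ℂ) • (matRe B)⁻¹ with hWdef
  have hW : W.PosDef := SectorAux.pd_combo hRA.inv hRB.inv hv0 hv1
  have hdetW : IsUnit W.det := SectorAux.pd_isUnit_det hW
  have hkey : (matRe (hmean v A B) - W⁻¹).PosSemidef :=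
    SectorAux.key_hmean hRA hRB hv0 hv1
  have hHm : (matRe (hmean v A B)).PosDef := by
    have h := hW.inv.add_posSemidef hkey
    have he : W⁻¹ + (matRe (hmean v A B) - W⁻¹) = matRe (hmean v A B) := by abel
    rwa [he] at h
  have hSW1 : (Φ W⁻¹).PosDef := SectorAux.Phi_pd hΦ1 hΦ2 hW.inv
  have hSH : (Φ (matRe (hmean v A B))).PosDef := by
    have h := hSW1.add_posSemidef (hΦ2 _ hkey)
    have he : Φ W⁻¹ + Φ (matRe (hmean v A B) - W⁻¹) = Φ (matRe (hmean v A B)) := by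
      rw [← map_add]; congr 1; abel
    rwa [he] at h
  have hdiff : (Φ (matRe (hmean v A B)) - Φ W⁻¹).PosSemidef := by
    rw [← map_sub]; exact hΦ2 _ hkey
  have c4 : ((Φ W⁻¹)⁻¹ - (Φ (matRe (hmean v A B)))⁻¹).PosSemidef :=
    SectorAux.inv_antitone hSW1 hSH hdiff
  have c3 : (Φ W - (Φ W⁻¹)⁻¹).PosSemidef := by
    have h := SectorAux.choi hΦ1 hΦ2 hW.inv
    rwa [Matrix.nonsing_inv_nonsing_inv _ hdetW] at h
  have hamean : matRe (amean v A B) = (v : ℂ) • matRe A + ((1 - v : ℝ) : ℂ) • matRe B := by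
    unfold amean
    rw [SectorAux.matRe_add, SectorAux.matRe_rsmul, SectorAux.matRe_rsmul]
  have hPhiA : (Φ (matRe (amean v A B))).PosSemidef := by
    refine hΦ2 _ ?_
    rw [hamean]
    exact (SectorAux.pd_combo hRA hRB hv0 hv1).posSemidef
  have c1 : (((1 - Real.cos θ ^ 2 : ℝ) : ℂ) • Φ (matRe (amean v A B))).PosSemidef :=
    SectorAux.psd_rsmul hPhiA (by nlinarith [Real.cos_sq_le_one θ] : (0:ℝ) ≤ 1 - Real.cos θ ^ 2)
  have hT0 : ((v : ℂ) • (((M + m : ℝ) : ℂ) • 1 - matRe A - ((m * M : ℝ) : ℂ) • (matRe A)⁻¹)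
      + ((1 - v : ℝ) : ℂ) • (((M + m : ℝ) : ℂ) • 1 - matRe B - ((m * M : ℝ) : ℂ) • (matRe B)⁻¹)).PosSemidef :=
    (SectorAux.psd_rsmul hTA hv0).add (SectorAux.psd_rsmul hTB (by linarith))
  have hT0eq : (v : ℂ) • (((M + m : ℝ) : ℂ) • (1 : Matrix (Fin n) (Fin n) ℂ) - matRe A - ((m * M : ℝ) : ℂ) • (matRe A)⁻¹)
      + ((1 - v : ℝ) : ℂ) • (((M + m : ℝ) : ℂ) • 1 - matRe B - ((m * M : ℝ) : ℂ) • (matRe B)⁻¹)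
      = ((M + m : ℝ) : ℂ) • 1 - ((v : ℂ) • matRe A + ((1 - v : ℝ) : ℂ) • matRe B)
        - ((m * M : ℝ) : ℂ) • W := by
    rw [hWdef]
    push_cast
    module
  have c2 : (Φ (((M + m : ℝ) : ℂ) • (1 : Matrix (Fin n) (Fin n) ℂ)
      - ((v : ℂ) • matRe A + ((1 - v : ℝ) : ℂ) • matRe B)
      - ((m * M : ℝ) : ℂ) • W)).PosSemidef := hΦ2 _ (hT0eq ▸ hT0)
  have c2eq : Φ (((M + m : ℝ) : ℂ) • (1 : Matrix (Fin n) (Fin n) ℂ)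
      - ((v : ℂ) • matRe A + ((1 - v : ℝ) : ℂ) • matRe B)
      - ((m * M : ℝ) : ℂ) • W)
      = ((M + m : ℝ) : ℂ) • (1 : Matrix (Fin n) (Fin n) ℂ)
        - Φ (matRe (amean v A B)) - ((m * M : ℝ) : ℂ) • Φ W := by
    rw [map_sub, map_sub, _root_.map_smul, _root_.map_smul, hΦ1, ← hamean]
  have hmM0 : (0:ℝ) ≤ m * M := le_of_lt (mul_pos hm hM)
  have total := c1.add (((hT0eq ▸ hT0 : _) |> hΦ2 _ : _).add
    ((SectorAux.psd_rsmul c3 hmM0).add (SectorAux.psd_rsmul c4 hmM0)))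
  unfold loewnerLE
  have heq : (M + m) • (1 : Matrix (Fin n) (Fin n) ℂ)
      - ((Real.cos θ ^ 2) • Φ (matRe (amean v A B)) + (m * M) • (Φ (matRe (hmean v A B)))⁻¹)
      = ((1 - Real.cos θ ^ 2 : ℝ) : ℂ) • Φ (matRe (amean v A B))
        + Φ (((M + m : ℝ) : ℂ) • (1 : Matrix (Fin n) (Fin n) ℂ)
            - ((v : ℂ) • matRe A + ((1 - v : ℝ) : ℂ) • matRe B) - ((m * M : ℝ) : ℂ) • W)
        + (((m * M : ℝ) : ℂ) • (Φ W - (Φ W⁻¹)⁻¹)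
            + ((m * M : ℝ) : ℂ) • ((Φ W⁻¹)⁻¹ - (Φ (matRe (hmean v A B)))⁻¹)) := by
    rw [c2eq, SectorAux.rsmul_eq (M + m), SectorAux.rsmul_eq (Real.cos θ ^ 2),
      SectorAux.rsmul_eq (m * M)]
    push_cast
    module
  rw [heq]
  rw [add_assoc]
  exact total
end

section
/- Let 0 ≤ θ < π/2, let A and B be n×n complex matrices in the sector class S_θ, let 0 < m ≤ M with mI ≤ ℜA ≤ MI and mI ≤ ℜB ≤ MI, let v ∈ [0,1], and let Φ be a positive unital linear map on M_n(ℂ). Then ℜ(Φ(A∇_vB)) ≤ sec²θ · K · ℜ(Φ(A!_vB)) in the Loewner order, where K = (M+m)²/(4mM). (This is the case p = 1, σ₁ = ∇_v, σ₂ = !_v of the paper's Theorem on powers of positive unital maps of means.) -/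
open Matrix
open scoped ComplexOrder

variable {n : ℕ}

local notation "Mat" => Matrix (Fin n) (Fin n) ℂ

lemma matRe_isHermitian (A : Mat) : (matRe A).IsHermitian := by
  unfold Matrix.IsHermitian matRe
  rw [conjTranspose_smul]
  simp [add_comm]

lemma star_two_I_inv : star ((2 * Complex.I)⁻¹ : ℂ) = -(2*Complex.I)⁻¹ := by
  rw [star_inv₀, show star (2*Complex.I) = -(2*Complex.I) by
    simp [Complex.star_def, Complex.conj_I], inv_neg]

lemma I_mul_two_I_inv : Complex.I * (2*Complex.I)⁻¹ = (2⁻¹ : ℂ) := by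
  rw [mul_inv, ← mul_assoc, mul_comm Complex.I, mul_assoc,
    mul_inv_cancel₀ Complex.I_ne_zero, mul_one]

lemma matIm_isHermitian (A : Mat) : (matIm A).IsHermitian := by
  unfold Matrix.IsHermitian matIm
  rw [conjTranspose_smul, conjTranspose_sub, conjTranspose_conjTranspose,
    star_two_I_inv]
  module

lemma matRe_add_I_smul (A : Mat) : A = matRe A + Complex.I • matIm A := by
  unfold matRe matIm
  rw [smul_smul, I_mul_two_I_inv]
  module

lemma conjTranspose_eq_re_sub (A : Mat) : Aᴴ = matRe A - Complex.I • matIm A := by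
  unfold matRe matIm
  rw [smul_smul, I_mul_two_I_inv]
  module

-- quadratic form helpers
lemma qf_swap (M : Mat) (a b : Fin n → ℂ) :
    star a ⬝ᵥ M *ᵥ b = star (star b ⬝ᵥ Mᴴ *ᵥ a) := by
  conv_rhs => rw [star_dotProduct]
  rw [star_star, star_mulVec, conjTranspose_conjTranspose, dotProduct_mulVec]

lemma qf_real (M : Mat) (hM : M.IsHermitian) (x : Fin n → ℂ) :
    (star x ⬝ᵥ M *ᵥ x).im = 0 := by
  have := qf_swap M x x
  rw [hM.eq] at this
  have h2 : star x ⬝ᵥ M *ᵥ x = star (star x ⬝ᵥ M *ᵥ x) := this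
  exact Complex.conj_eq_iff_im.mp h2.symm



lemma qf_matRe (T : Mat) (x : Fin n → ℂ) :
    star x ⬝ᵥ matRe T *ᵥ x
      = (2⁻¹:ℂ) * (star x ⬝ᵥ T *ᵥ x + star (star x ⬝ᵥ T *ᵥ x)) := by
  unfold matRe
  rw [smul_mulVec, dotProduct_smul, add_mulVec, dotProduct_add, smul_eq_mul]
  congr 1
  rw [qf_swap Tᴴ x x, conjTranspose_conjTranspose]

lemma isUnit_det_of_matRe_posDef {T : Mat} (h : (matRe T).PosDef) : IsUnit T.det := by
  rw [← Matrix.isUnit_iff_isUnit_det, ← Matrix.mulVec_injective_iff_isUnit]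
  have hker : ∀ x, T *ᵥ x = 0 → x = 0 := by
    intro x hx
    by_contra hx0
    have h0 : star x ⬝ᵥ T *ᵥ x = 0 := by rw [hx, dotProduct_zero]
    have h1 : star x ⬝ᵥ matRe T *ᵥ x = 0 := by rw [qf_matRe, h0]; simp
    have := h.dotProduct_mulVec_pos hx0
    rw [h1] at this
    exact lt_irrefl _ this
  intro x y hxy
  have h2 : T *ᵥ (x - y) = 0 := by rw [mulVec_sub, hxy, sub_self]
  exact sub_eq_zero.mp (hker _ h2)

lemma isUnit_det_conjTranspose' {T : Mat} (hT : IsUnit T.det) : IsUnit Tᴴ.det := by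
  rw [det_conjTranspose]; exact hT.star

lemma matRe_inv {T : Mat} (hT : IsUnit T.det) :
    matRe T⁻¹ = T⁻¹ * matRe T * (T⁻¹)ᴴ := by
  unfold matRe
  rw [conjTranspose_nonsing_inv, Matrix.mul_smul, Matrix.smul_mul]
  congr 1
  rw [mul_add, add_mul, Matrix.nonsing_inv_mul _ hT, one_mul, mul_assoc,
    Matrix.mul_nonsing_inv _ (isUnit_det_conjTranspose' hT), mul_one, add_comm]

lemma matIm_inv {T : Mat} (hT : IsUnit T.det) :
    matIm T⁻¹ = -(T⁻¹ * matIm T * (T⁻¹)ᴴ) := by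
  unfold matIm
  rw [conjTranspose_nonsing_inv, Matrix.mul_smul, Matrix.smul_mul]
  rw [mul_sub, sub_mul, Matrix.nonsing_inv_mul _ hT, one_mul, mul_assoc,
    Matrix.mul_nonsing_inv _ (isUnit_det_conjTranspose' hT), mul_one]
  module

lemma congr_expand {R S X : Mat} (hRX : R * X = 1) (hXR : X * R = 1) :
    (R + Complex.I • S) * X * (R - Complex.I • S) = R + S * X * S := by
  have e1 : R * X * R = R := by rw [hRX, one_mul]
  have e2 : R * X * (Complex.I • S) = Complex.I • S := by rw [hRX, one_mul]
  have e3 : (Complex.I • S) * X * R = Complex.I • S := by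
    rw [mul_assoc, smul_mul_assoc, hXR, mul_one]
  have e4 : (Complex.I • S) * X * (Complex.I • S)
      = (Complex.I * Complex.I) • (S * X * S) := by
    simp [smul_mul_assoc, mul_smul_comm, smul_smul]
  rw [add_mul, add_mul, mul_sub, mul_sub, e1, e2, e3, e4, Complex.I_mul_I]
  module

lemma sandwich_cancel {T : Mat} (hT : IsUnit T.det) (X : Mat) :
    T⁻¹ * (T * X * Tᴴ) * (T⁻¹)ᴴ = X := by
  rw [conjTranspose_nonsing_inv]
  calc T⁻¹ * (T * X * Tᴴ) * (Tᴴ)⁻¹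
      = (T⁻¹ * T) * X * (Tᴴ * (Tᴴ)⁻¹) := by noncomm_ring
    _ = X := by
        rw [Matrix.nonsing_inv_mul _ hT,
          Matrix.mul_nonsing_inv _ (isUnit_det_conjTranspose' hT), one_mul, mul_one]

lemma qf_conj (N X : Mat) (x : Fin n → ℂ) :
    star x ⬝ᵥ (N * X * Nᴴ) *ᵥ x = star (Nᴴ *ᵥ x) ⬝ᵥ X *ᵥ (Nᴴ *ᵥ x) := by
  rw [star_mulVec, conjTranspose_conjTranspose, ← mulVec_mulVec, ← mulVec_mulVec,
    dotProduct_mulVec]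
lemma posSemidef_of_re {X : Mat} (hX : X.IsHermitian)
    (h : ∀ x, 0 ≤ (star x ⬝ᵥ X *ᵥ x).re) : X.PosSemidef :=
  Matrix.PosSemidef.of_dotProduct_mulVec_nonneg hX fun x => Complex.nonneg_iff.mpr ⟨h x, (qf_real X hX x).symm⟩

lemma re_nonneg_of_posSemidef {X : Mat} (h : X.PosSemidef) (x : Fin n → ℂ) :
    0 ≤ (star x ⬝ᵥ X *ᵥ x).re :=
  (Complex.nonneg_iff.mp (h.dotProduct_mulVec_nonneg x)).1

lemma isHermitian_smul_real {X : Mat} (hX : X.IsHermitian) (c : ℝ) :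
    ((c : ℂ) • X).IsHermitian := by
  unfold Matrix.IsHermitian
  rw [conjTranspose_smul, hX.eq, Complex.star_def, Complex.conj_ofReal]

lemma posSemidef_smul_real {X : Mat} (h : X.PosSemidef) {c : ℝ} (hc : 0 ≤ c) :
    ((c : ℂ) • X).PosSemidef := by
  refine posSemidef_of_re (isHermitian_smul_real h.1 c) fun x => ?_
  rw [smul_mulVec, dotProduct_smul, smul_eq_mul, Complex.mul_re,
    Complex.ofReal_re, Complex.ofReal_im, zero_mul, sub_zero]
  exact mul_nonneg hc (re_nonneg_of_posSemidef h x)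

lemma qf_smul_vec (X : Mat) (c : ℝ) (u : Fin n → ℂ) :
    star ((c:ℂ) • u) ⬝ᵥ X *ᵥ ((c:ℂ) • u) = ((c:ℂ)^2) * (star u ⬝ᵥ X *ᵥ u) := by
  rw [mulVec_smul, dotProduct_smul, star_smul, smul_dotProduct]
  rw [show star ((c:ℂ)) = (c:ℂ) from by rw [Complex.star_def, Complex.conj_ofReal]]
  rw [smul_eq_mul, smul_eq_mul]; ring

lemma sector_bound {R S : Mat} (hR : R.PosDef) (hS : S.IsHermitian) {t : ℝ} (ht : 0 ≤ t)
    (h : ∀ x, |(star x ⬝ᵥ S *ᵥ x).re| ≤ t * (star x ⬝ᵥ R *ᵥ x).re) :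
    (((t^2 : ℝ) : ℂ) • R - S * R⁻¹ * S).PosSemidef := by
  have hRdet : IsUnit R.det := (Matrix.isUnit_iff_isUnit_det R).mp hR.isUnit
  set K := S * R⁻¹ * S with hKdef
  have hK : K.IsHermitian := by
    unfold Matrix.IsHermitian
    rw [hKdef, conjTranspose_mul, conjTranspose_mul, hS.eq, hR.1.inv.eq, mul_assoc]
  have hKpsd : K.PosSemidef := by
    have h0 := (hR.inv.posSemidef).mul_mul_conjTranspose_same S
    rw [hS.eq] at h0
    exact hKdef ▸ h0
  -- cross inequality
  have hcross : ∀ y z : Fin n → ℂ,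
      (star y ⬝ᵥ S *ᵥ z + star z ⬝ᵥ S *ᵥ y).re
        ≤ t * ((star y ⬝ᵥ R *ᵥ y).re + (star z ⬝ᵥ R *ᵥ z).re) := by
    intro y z
    have h1 := h (y + z)
    have h2 := h (y - z)
    have dS : star (y+z) ⬝ᵥ S *ᵥ (y+z) - star (y-z) ⬝ᵥ S *ᵥ (y-z)
        = 2 * (star y ⬝ᵥ S *ᵥ z + star z ⬝ᵥ S *ᵥ y) := by
      simp only [mulVec_add, mulVec_sub, star_add, star_sub, add_dotProduct,
        sub_dotProduct, dotProduct_add, dotProduct_sub]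
      ring
    have dR : star (y+z) ⬝ᵥ R *ᵥ (y+z) + star (y-z) ⬝ᵥ R *ᵥ (y-z)
        = 2 * (star y ⬝ᵥ R *ᵥ y + star z ⬝ᵥ R *ᵥ z) := by
      simp only [mulVec_add, mulVec_sub, star_add, star_sub, add_dotProduct,
        sub_dotProduct, dotProduct_add, dotProduct_sub]
      ring
    have dSre := congrArg Complex.re dS
    have dRre := congrArg Complex.re dR
    simp only [Complex.sub_re, Complex.add_re, two_mul] at dSre dRre
    simp only [Complex.add_re]
    have a1 := (abs_le.mp h1).2
    have a2 := (abs_le.mp h2).1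
    have key : t * ((star (y+z) ⬝ᵥ R *ᵥ (y+z)).re) + t * ((star (y-z) ⬝ᵥ R *ᵥ (y-z)).re)
        = 2 * (t * ((star y ⬝ᵥ R *ᵥ y).re + (star z ⬝ᵥ R *ᵥ z).re)) := by
      linear_combination t * dRre
    linarith
  -- pointwise conclusion
  refine posSemidef_of_re ((isHermitian_smul_real hR.1 (t^2)).sub hK) fun x => ?_
  set w := S *ᵥ x with hw
  set u := R⁻¹ *ᵥ w with hu
  have f1 : S *ᵥ u = K *ᵥ x := by
    rw [hu, hw, mulVec_mulVec, mulVec_mulVec, hKdef]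
  have f2 : R *ᵥ u = w := by
    rw [hu, mulVec_mulVec, Matrix.mul_nonsing_inv _ hRdet, one_mulVec]
  set q := star x ⬝ᵥ K *ᵥ x with hq
  set p := star x ⬝ᵥ R *ᵥ x with hp
  have hq_im : q.im = 0 := qf_real K hK x
  have huSx : star u ⬝ᵥ S *ᵥ x = star q := by
    rw [qf_swap S u x, hS.eq, f1, ← hq]
  have huRu : star u ⬝ᵥ R *ᵥ u = star q := by rw [f2, hw, huSx]
  have key : ∀ lam : ℝ, 2 * lam * q.re ≤ t * (p.re + lam^2 * q.re) := by
    intro lam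
    have hc := hcross x ((lam:ℂ) • u)
    have e1 : star x ⬝ᵥ S *ᵥ ((lam:ℂ) • u) = (lam:ℂ) * q := by
      rw [mulVec_smul, dotProduct_smul, f1, smul_eq_mul, hq]
    have e2 : star ((lam:ℂ) • u) ⬝ᵥ S *ᵥ x = (lam:ℂ) * star q := by
      rw [star_smul, smul_dotProduct, huSx,
        show star ((lam:ℂ)) = (lam:ℂ) from by rw [Complex.star_def, Complex.conj_ofReal],
        smul_eq_mul]
    have e3 : star ((lam:ℂ) • u) ⬝ᵥ R *ᵥ ((lam:ℂ) • u) = (lam:ℂ)^2 * star q := by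
      rw [qf_smul_vec, huRu]
    rw [e1, e2, e3] at hc
    have : ((lam:ℂ) * q + (lam:ℂ) * star q).re = 2 * lam * q.re := by
      simp [Complex.add_re, Complex.mul_re, Complex.conj_re, Complex.conj_im, hq_im]
      ring
    rw [this] at hc
    have : (((lam:ℂ))^2 * star q).re = lam^2 * q.re := by
      simp [Complex.mul_re, Complex.conj_re, Complex.conj_im, hq_im, ← Complex.ofReal_pow]
    rw [this] at hc
    exact hc
  have hqre : 0 ≤ q.re := re_nonneg_of_posSemidef hKpsd x
  have hpre : 0 ≤ p.re := re_nonneg_of_posSemidef hR.posSemidef x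
  have main : q.re ≤ t^2 * p.re := by
    rcases eq_or_lt_of_le ht with ht0 | htpos
    · have := key 1
      rw [← ht0] at this ⊢
      nlinarith
    · have hl := key t⁻¹
      have e : t * (p.re + t⁻¹^2 * q.re) = t * p.re + t⁻¹ * q.re := by
        field_simp
      rw [e] at hl
      have h1 : t⁻¹ * q.re ≤ t * p.re := by
        have h2 : 2 * t⁻¹ * q.re = t⁻¹ * q.re + t⁻¹ * q.re := by ring
        linarith
      have h3 := mul_le_mul_of_nonneg_left h1 (le_of_lt htpos)
      have e2 : t * (t⁻¹ * q.re) = q.re := by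
        field_simp
      rw [e2] at h3
      nlinarith
  rw [sub_mulVec, dotProduct_sub, Complex.sub_re, smul_mulVec, dotProduct_smul,
    smul_eq_mul, Complex.mul_re, Complex.ofReal_re, Complex.ofReal_im, zero_mul, sub_zero,
    ← hq, ← hp]
  linarith

lemma inv_antitone {P Q : Mat} (hP : P.PosDef) (hQ : Q.PosDef)
    (h : (Q - P).PosSemidef) : (P⁻¹ - Q⁻¹).PosSemidef := by
  have hPd : IsUnit P.det := (Matrix.isUnit_iff_isUnit_det P).mp hP.isUnit
  have hQd : IsUnit Q.det := (Matrix.isUnit_iff_isUnit_det Q).mp hQ.isUnit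
  refine posSemidef_of_re (hP.1.inv.sub hQ.1.inv) fun x => ?_
  set a := Q⁻¹ *ᵥ x with ha
  set b := P⁻¹ *ᵥ x with hb
  have fQ : Q *ᵥ a = x := by
    rw [ha, mulVec_mulVec, Matrix.mul_nonsing_inv _ hQd, one_mulVec]
  have fP : P *ᵥ b = x := by
    rw [hb, mulVec_mulVec, Matrix.mul_nonsing_inv _ hPd, one_mulVec]
  have id1 : star b ⬝ᵥ P *ᵥ b = star x ⬝ᵥ P⁻¹ *ᵥ x := by
    rw [fP, hb, star_mulVec, hP.1.inv.eq, dotProduct_mulVec]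
  have id2 : star a ⬝ᵥ Q *ᵥ a = star x ⬝ᵥ Q⁻¹ *ᵥ x := by
    rw [fQ, ha, star_mulVec, hQ.1.inv.eq, dotProduct_mulVec]
  have id3 : star a ⬝ᵥ P *ᵥ b = star x ⬝ᵥ Q⁻¹ *ᵥ x := by
    rw [fP, ha, star_mulVec, hQ.1.inv.eq, dotProduct_mulVec]
  have id4 : star b ⬝ᵥ P *ᵥ a = star (star x ⬝ᵥ Q⁻¹ *ᵥ x) := by
    rw [qf_swap P b a, hP.1.eq, id3]
  have expand : star (a-b) ⬝ᵥ P *ᵥ (a-b)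
      = star a ⬝ᵥ P *ᵥ a - star x ⬝ᵥ Q⁻¹ *ᵥ x - star (star x ⬝ᵥ Q⁻¹ *ᵥ x)
        + star x ⬝ᵥ P⁻¹ *ᵥ x := by
    rw [star_sub, sub_dotProduct, mulVec_sub, dotProduct_sub, dotProduct_sub,
      id1, id3, id4]
    ring
  have h1 : 0 ≤ (star (a-b) ⬝ᵥ P *ᵥ (a-b)).re := re_nonneg_of_posSemidef hP.posSemidef _
  have h2 : 0 ≤ (star a ⬝ᵥ (Q - P) *ᵥ a).re := re_nonneg_of_posSemidef h _
  have h2' : (star a ⬝ᵥ (Q - P) *ᵥ a).re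
      = (star a ⬝ᵥ Q *ᵥ a).re - (star a ⬝ᵥ P *ᵥ a).re := by
    rw [sub_mulVec, dotProduct_sub, Complex.sub_re]
  have hre := congrArg Complex.re expand
  simp only [Complex.sub_re, Complex.add_re, Complex.star_def, Complex.conj_re] at hre
  have hid2 := congrArg Complex.re id2
  rw [sub_mulVec, dotProduct_sub, Complex.sub_re]
  linarith
lemma posDef_combo {v : ℝ} (hv0 : 0 ≤ v) (hv1 : v ≤ 1) {P Q : Mat}
    (hP : P.PosDef) (hQ : Q.PosDef) :
    ((v:ℂ) • P + ((1 - v : ℝ):ℂ) • Q).PosDef := by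
  refine Matrix.PosDef.of_dotProduct_mulVec_pos ?_ ?_
  · exact ((isHermitian_smul_real hP.1 v).add (isHermitian_smul_real hQ.1 (1-v)))
  · intro x hx
    rw [add_mulVec, dotProduct_add, smul_mulVec, dotProduct_smul,
      smul_mulVec, dotProduct_smul, smul_eq_mul, smul_eq_mul]
    have hp := hP.dotProduct_mulVec_pos hx
    have hq := hQ.dotProduct_mulVec_pos hx
    rcases lt_or_eq_of_le hv0 with hv | hv
    · have t1 : 0 < (v:ℂ) * (star x ⬝ᵥ P *ᵥ x) := by
        apply mul_pos _ hp
        exact_mod_cast Complex.zero_lt_real.mpr hv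
      have t2 : 0 ≤ ((1-v:ℝ):ℂ) * (star x ⬝ᵥ Q *ᵥ x) := by
        apply mul_nonneg _ hq.le
        exact_mod_cast Complex.zero_le_real.mpr (by linarith)
      exact add_pos_of_pos_of_nonneg t1 t2
    · have t2 : 0 < ((1-v:ℝ):ℂ) * (star x ⬝ᵥ Q *ᵥ x) := by
        apply mul_pos _ hq
        exact_mod_cast Complex.zero_lt_real.mpr (by linarith)
      have t1 : 0 ≤ (v:ℂ) * (star x ⬝ᵥ P *ᵥ x) := by
        apply mul_nonneg _ hp.le
        exact_mod_cast Complex.zero_le_real.mpr hv0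
      exact add_pos_of_nonneg_of_pos t1 t2

lemma star_dot_self_eigenvector {X : Mat} (hX : X.IsHermitian) (i : Fin n) :
    star ⇑(hX.eigenvectorBasis i) ⬝ᵥ ⇑(hX.eigenvectorBasis i) = 1 := by
  have h := hX.eigenvectorBasis.orthonormal.1 i
  have h2 := EuclideanSpace.inner_eq_star_dotProduct (𝕜 := ℂ)
    (hX.eigenvectorBasis i) (hX.eigenvectorBasis i)
  rw [inner_self_eq_norm_sq_to_K, h] at h2
  rw [dotProduct_comm, ← h2]
  norm_num

lemma qf_eigenvector {X : Mat} (hX : X.IsHermitian) (i : Fin n) :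
    star ⇑(hX.eigenvectorBasis i) ⬝ᵥ X *ᵥ ⇑(hX.eigenvectorBasis i)
      = ((hX.eigenvalues i : ℝ) : ℂ) := by
  rw [hX.mulVec_eigenvectorBasis, dotProduct_smul, star_dot_self_eigenvector hX i]
  simp [Complex.real_smul]

lemma eigenvalues_le_of_loewner {X : Mat} (hX : X.IsHermitian) {M : ℝ}
    (h : (((M:ℝ):ℂ) • (1:Mat) - X).PosSemidef) (i : Fin n) : hX.eigenvalues i ≤ M := by
  have h0 := re_nonneg_of_posSemidef h ⇑(hX.eigenvectorBasis i)
  rw [sub_mulVec, dotProduct_sub, smul_mulVec, dotProduct_smul, one_mulVec,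
    star_dot_self_eigenvector hX i, qf_eigenvector hX i] at h0
  simp only [smul_eq_mul, mul_one, Complex.sub_re, Complex.ofReal_re] at h0
  linarith

lemma eigenvalues_ge_of_loewner {X : Mat} (hX : X.IsHermitian) {m : ℝ}
    (h : (X - ((m:ℝ):ℂ) • (1:Mat)).PosSemidef) (i : Fin n) : m ≤ hX.eigenvalues i := by
  have h0 := re_nonneg_of_posSemidef h ⇑(hX.eigenvectorBasis i)
  rw [sub_mulVec, dotProduct_sub, smul_mulVec, dotProduct_smul, one_mulVec,
    star_dot_self_eigenvector hX i, qf_eigenvector hX i] at h0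
  simp only [smul_eq_mul, mul_one, Complex.sub_re, Complex.ofReal_re] at h0
  linarith

lemma herm_combo_psd {X : Mat} (hX : X.PosDef) (a b c : ℝ)
    (h : ∀ i, 0 ≤ a * hX.1.eigenvalues i + b * (hX.1.eigenvalues i)⁻¹ + c) :
    ((a:ℂ) • X + (b:ℂ) • X⁻¹ + (c:ℂ) • (1:Mat)).PosSemidef := by
  set U : Mat := (Matrix.IsHermitian.eigenvectorUnitary hX.1 : Mat) with hUdef
  have hUU : U * Uᴴ = 1 := by
    rw [← Matrix.star_eq_conjTranspose]
    exact (Matrix.mem_unitaryGroup_iff).mp (Matrix.IsHermitian.eigenvectorUnitary hX.1).2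
  have hU'U : Uᴴ * U = 1 := by
    rw [← Matrix.star_eq_conjTranspose]
    exact (Matrix.mem_unitaryGroup_iff').mp (Matrix.IsHermitian.eigenvectorUnitary hX.1).2
  set d := hX.1.eigenvalues with hd
  have hdpos : ∀ i, 0 < d i := fun i => hX.eigenvalues_pos i
  set D : Mat := diagonal (fun i => ((d i : ℝ) : ℂ)) with hD
  have hspec : X = U * D * Uᴴ := by
    rw [← Matrix.star_eq_conjTranspose]
    exact hX.1.spectral_theorem
  have hDinv : D⁻¹ = diagonal (fun i => (((d i)⁻¹ : ℝ) : ℂ)) := by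
    apply Matrix.inv_eq_right_inv
    rw [hD, diagonal_mul_diagonal]
    have e : (fun i => ((d i : ℝ):ℂ) * (((d i)⁻¹ : ℝ):ℂ)) = fun _ => (1:ℂ) := by
      funext i
      rw [← Complex.ofReal_mul, mul_inv_cancel₀ (hdpos i).ne', Complex.ofReal_one]
    rw [e, diagonal_one]
  have hDdetD : D * D⁻¹ = 1 := by
    rw [hDinv, hD, diagonal_mul_diagonal]
    have e : (fun i => ((d i : ℝ):ℂ) * (((d i)⁻¹ : ℝ):ℂ)) = fun _ => (1:ℂ) := by
      funext i
      rw [← Complex.ofReal_mul, mul_inv_cancel₀ (hdpos i).ne', Complex.ofReal_one]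
    rw [e, diagonal_one]
  have hXinv : X⁻¹ = U * D⁻¹ * Uᴴ := by
    apply Matrix.inv_eq_right_inv
    rw [hspec]
    calc U * D * Uᴴ * (U * D⁻¹ * Uᴴ) = U * (D * (Uᴴ * U) * D⁻¹) * Uᴴ := by
          noncomm_ring
      _ = 1 := by rw [hU'U, mul_one, hDdetD, mul_one, hUU]
  have key : (a:ℂ) • X + (b:ℂ) • X⁻¹ + (c:ℂ) • (1:Mat)
      = U * diagonal (fun i => ((a * d i + b * (d i)⁻¹ + c : ℝ) : ℂ)) * Uᴴ := by
    have e1 : (a:ℂ) • X + (b:ℂ) • X⁻¹ + (c:ℂ) • (1:Mat)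
        = U * ((a:ℂ) • D + (b:ℂ) • D⁻¹ + (c:ℂ) • (1:Mat)) * Uᴴ := by
      rw [hXinv]
      nth_rewrite 1 [hspec]
      simp only [Matrix.mul_add, Matrix.add_mul, Matrix.mul_smul, Matrix.smul_mul,
        Matrix.mul_one, hUU]
    rw [e1]
    congr 1
    congr 1
    rw [hDinv, hD, ← diagonal_one, ← diagonal_smul, ← diagonal_smul, ← diagonal_smul,
      diagonal_add, diagonal_add]
    congr 1
    funext i
    simp only [Pi.add_apply, Pi.smul_apply, smul_eq_mul]
    push_cast
    ring
  rw [key]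
  apply Matrix.PosSemidef.mul_mul_conjTranspose_same
  refine posSemidef_diagonal_iff.mpr fun i => ?_
  exact_mod_cast Complex.zero_le_real.mpr (h i)

lemma kanto_one {X : Mat} (hX : X.PosDef) {m M : ℝ} (hm : 0 < m)
    (h1 : (X - ((m:ℝ):ℂ) • (1:Mat)).PosSemidef)
    (h2 : (((M:ℝ):ℂ) • (1:Mat) - X).PosSemidef) :
    ((((m+M:ℝ)):ℂ) • (1:Mat) - X - (((m*M:ℝ)):ℂ) • X⁻¹).PosSemidef := by
  have sc : ∀ i, 0 ≤ (-1) * hX.1.eigenvalues i + (-(m*M)) * (hX.1.eigenvalues i)⁻¹ + (m+M) := by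
    intro i
    have hge := eigenvalues_ge_of_loewner hX.1 h1 i
    have hle := eigenvalues_le_of_loewner hX.1 h2 i
    set dd := hX.1.eigenvalues i
    have hd : 0 < dd := lt_of_lt_of_le hm hge
    have e : (-1) * dd + (-(m*M)) * dd⁻¹ + (m+M) = (M - dd)*(dd - m)/dd := by
      field_simp
      ring
    rw [e]
    apply div_nonneg _ hd.le
    exact mul_nonneg (by linarith) (by linarith)
  have h0 := herm_combo_psd hX (-1) (-(m*M)) (m+M) sc
  have e : (((-1:ℝ)):ℂ) • X + (((-(m*M):ℝ)):ℂ) • X⁻¹ + (((m+M:ℝ)):ℂ) • (1:Mat)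
      = (((m+M:ℝ)):ℂ) • (1:Mat) - X - (((m*M:ℝ)):ℂ) • X⁻¹ := by
    push_cast
    module
  rwa [e] at h0

lemma kanto_two {Z : Mat} (hZ : Z.PosDef) {m M : ℝ} (hm : 0 < m) (hmM : m ≤ M) :
    (((((M+m)^2/(4*m*M) : ℝ)):ℂ) • Z + (((m*M:ℝ)):ℂ) • Z⁻¹
      - (((m+M:ℝ)):ℂ) • (1:Mat)).PosSemidef := by
  have sc : ∀ i, 0 ≤ ((M+m)^2/(4*m*M)) * hZ.1.eigenvalues i
      + (m*M) * (hZ.1.eigenvalues i)⁻¹ + (-(m+M)) := by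
    intro i
    have hd : 0 < hZ.1.eigenvalues i := hZ.eigenvalues_pos i
    set z := hZ.1.eigenvalues i
    have hM : 0 < M := lt_of_lt_of_le hm hmM
    have e : ((M+m)^2/(4*m*M)) * z + (m*M) * z⁻¹ + (-(m+M))
        = ((M+m)*z - 2*m*M)^2 / (4*m*M*z) := by
      field_simp
      ring
    rw [e]
    positivity
  have h0 := herm_combo_psd hZ ((M+m)^2/(4*m*M)) (m*M) (-(m+M)) sc
  have e : ((((M+m)^2/(4*m*M) : ℝ)):ℂ) • Z + (((m*M:ℝ)):ℂ) • Z⁻¹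
        + (((-(m+M):ℝ)):ℂ) • (1:Mat)
      = ((((M+m)^2/(4*m*M) : ℝ)):ℂ) • Z + (((m*M:ℝ)):ℂ) • Z⁻¹
        - (((m+M:ℝ)):ℂ) • (1:Mat) := by
    push_cast
    module
  rwa [e] at h0

lemma herm_decomp {X : Mat} (hX : X.IsHermitian) :
    ∃ P Q : Mat, P.PosSemidef ∧ Q.PosSemidef ∧ X = P - Q := by
  set U : Mat := (Matrix.IsHermitian.eigenvectorUnitary hX : Mat) with hUdef
  set d := hX.eigenvalues with hd
  refine ⟨U * diagonal (fun i => ((max (d i) 0 : ℝ) : ℂ)) * Uᴴ,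
    U * diagonal (fun i => ((max (-(d i)) 0 : ℝ) : ℂ)) * Uᴴ, ?_, ?_, ?_⟩
  · exact (posSemidef_diagonal_iff.mpr fun i =>
      Complex.zero_le_real.mpr (le_max_right _ _)).mul_mul_conjTranspose_same U
  · exact (posSemidef_diagonal_iff.mpr fun i =>
      Complex.zero_le_real.mpr (le_max_right _ _)).mul_mul_conjTranspose_same U
  · have hspec : X = U * diagonal (fun i => ((d i : ℝ) : ℂ)) * Uᴴ := by
      rw [← Matrix.star_eq_conjTranspose]
      exact hX.spectral_theorem
    rw [← Matrix.sub_mul, ← Matrix.mul_sub, diagonal_sub]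
    rw [hspec]
    have e : (diagonal fun i => ((d i : ℝ):ℂ))
        = diagonal fun i => (((max (d i) 0 : ℝ):ℂ) - ((max (-(d i)) 0 : ℝ):ℂ)) := by
      have e2 : (fun i => ((d i : ℝ):ℂ))
          = fun i => (((max (d i) 0 : ℝ):ℂ) - ((max (-(d i)) 0 : ℝ):ℂ)) := by
        funext i
        rw [← Complex.ofReal_sub, max_zero_sub_max_neg_zero_eq_self]
      rw [e2]
    rw [e]

lemma phi_isHermitian {Φ : Mat →ₗ[ℂ] Mat}
    (hΦ : Φ 1 = 1 ∧ ∀ X : Mat, X.PosSemidef → (Φ X).PosSemidef)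
    {X : Mat} (hX : X.IsHermitian) : (Φ X).IsHermitian := by
  obtain ⟨P, Q, hP, hQ, hPQ⟩ := herm_decomp hX
  rw [hPQ, map_sub]
  exact ((hΦ.2 P hP).1).sub ((hΦ.2 Q hQ).1)

lemma phi_conjTranspose {Φ : Mat →ₗ[ℂ] Mat}
    (hΦ : Φ 1 = 1 ∧ ∀ X : Mat, X.PosSemidef → (Φ X).PosSemidef)
    (X : Mat) : Φ (Xᴴ) = (Φ X)ᴴ := by
  have hre := phi_isHermitian hΦ (matRe_isHermitian X)
  have him := phi_isHermitian hΦ (matIm_isHermitian X)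
  have e1 : Φ (Xᴴ) = Φ (matRe X) - Complex.I • Φ (matIm X) := by
    rw [conjTranspose_eq_re_sub X, map_sub, _root_.map_smul]
  have e2 : (Φ X)ᴴ = Φ (matRe X) - Complex.I • Φ (matIm X) := by
    nth_rewrite 1 [matRe_add_I_smul X]
    rw [map_add, _root_.map_smul, conjTranspose_add, conjTranspose_smul, hre.eq, him.eq,
      Complex.star_def, Complex.conj_I]
    module
  rw [e1, e2]

lemma phi_matRe {Φ : Mat →ₗ[ℂ] Mat}
    (hΦ : Φ 1 = 1 ∧ ∀ X : Mat, X.PosSemidef → (Φ X).PosSemidef)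
    (X : Mat) : matRe (Φ X) = Φ (matRe X) := by
  unfold matRe
  rw [_root_.map_smul, map_add, phi_conjTranspose hΦ]

lemma mulVec_ne_zero_of_isUnit {N : Mat} (hN : IsUnit N.det) {x : Fin n → ℂ}
    (hx : x ≠ 0) : N *ᵥ x ≠ 0 := by
  intro h0
  apply hx
  have hinj := Matrix.mulVec_injective_iff_isUnit.mpr ((Matrix.isUnit_iff_isUnit_det N).mpr hN)
  apply hinj
  rw [h0, mulVec_zero]

lemma posDef_conj_invertible {X N : Mat} (hX : X.PosDef) (hN : IsUnit N.det) :
    (N * X * Nᴴ).PosDef := by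
  refine Matrix.PosDef.of_dotProduct_mulVec_pos ?_ ?_
  · unfold Matrix.IsHermitian
    rw [conjTranspose_mul, conjTranspose_mul, conjTranspose_conjTranspose, hX.1.eq,
      mul_assoc]
  · intro x hx
    rw [qf_conj]
    apply hX.dotProduct_mulVec_pos
    apply mulVec_ne_zero_of_isUnit _ hx
    rw [Matrix.det_conjTranspose]
    exact hN.star

lemma matRe_inv_posDef {T : Mat} (hRe : (matRe T).PosDef) : (matRe T⁻¹).PosDef := by
  have hdet := isUnit_det_of_matRe_posDef hRe
  rw [matRe_inv hdet]
  exact posDef_conj_invertible hRe (Matrix.isUnit_nonsing_inv_det T hdet)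

lemma sector_inv {T : Mat} (hRe : (matRe T).PosDef) {t : ℝ}
    (h : ∀ x, |(star x ⬝ᵥ matIm T *ᵥ x).re| ≤ t * (star x ⬝ᵥ matRe T *ᵥ x).re) :
    ∀ x, |(star x ⬝ᵥ matIm T⁻¹ *ᵥ x).re| ≤ t * (star x ⬝ᵥ matRe T⁻¹ *ᵥ x).re := by
  intro x
  have hdet := isUnit_det_of_matRe_posDef hRe
  rw [matRe_inv hdet, matIm_inv hdet, neg_mulVec, dotProduct_neg, Complex.neg_re,
    abs_neg, qf_conj, qf_conj]
  exact h ((T⁻¹)ᴴ *ᵥ x)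

lemma sRs_psd {R S : Mat} (hR : R.PosDef) (hS : S.IsHermitian) :
    (S * R⁻¹ * S).PosSemidef := by
  have h0 := (hR.inv.posSemidef).mul_mul_conjTranspose_same S
  rwa [hS.eq] at h0

lemma re_inv_diff {T : Mat} (hRe : (matRe T).PosDef) :
    ((matRe T)⁻¹ - matRe T⁻¹).PosSemidef := by
  have hdet := isUnit_det_of_matRe_posDef hRe
  have hRdet : IsUnit (matRe T).det := (Matrix.isUnit_iff_isUnit_det _).mp hRe.isUnit
  have hcongr : T * (matRe T)⁻¹ * Tᴴ = matRe T + matIm T * (matRe T)⁻¹ * matIm T := by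
    have e := congr_expand (R := matRe T) (S := matIm T) (X := (matRe T)⁻¹)
      (Matrix.mul_nonsing_inv _ hRdet) (Matrix.nonsing_inv_mul _ hRdet)
    rw [← matRe_add_I_smul T, ← conjTranspose_eq_re_sub T] at e
    exact e
  have hkey : (matRe T)⁻¹ - matRe T⁻¹
      = T⁻¹ * (matIm T * (matRe T)⁻¹ * matIm T) * (T⁻¹)ᴴ := by
    have h1 : T⁻¹ * (T * (matRe T)⁻¹ * Tᴴ) * (T⁻¹)ᴴ = (matRe T)⁻¹ :=
      sandwich_cancel hdet _
    nth_rewrite 1 [← h1]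
    rw [matRe_inv hdet, hcongr]
    noncomm_ring
  rw [hkey]
  exact (sRs_psd hRe (matIm_isHermitian T)).mul_mul_conjTranspose_same _

lemma matRe_combo (v w : ℝ) (P Q : Mat) :
    matRe ((v:ℂ) • P + (w:ℂ) • Q) = (v:ℂ) • matRe P + (w:ℂ) • matRe Q := by
  unfold matRe
  rw [conjTranspose_add, conjTranspose_smul, conjTranspose_smul,
    Complex.star_def, Complex.conj_ofReal, Complex.conj_ofReal]
  module

lemma matIm_combo (v w : ℝ) (P Q : Mat) :
    matIm ((v:ℂ) • P + (w:ℂ) • Q) = (v:ℂ) • matIm P + (w:ℂ) • matIm Q := by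
  unfold matIm
  rw [conjTranspose_add, conjTranspose_smul, conjTranspose_smul,
    Complex.star_def, Complex.conj_ofReal, Complex.conj_ofReal]
  module

lemma qf_combo_re (v w : ℝ) (P Q : Mat) (x : Fin n → ℂ) :
    (star x ⬝ᵥ ((v:ℂ) • P + (w:ℂ) • Q) *ᵥ x).re
      = v * (star x ⬝ᵥ P *ᵥ x).re + w * (star x ⬝ᵥ Q *ᵥ x).re := by
  rw [add_mulVec, dotProduct_add, smul_mulVec, smul_mulVec,
    dotProduct_smul, dotProduct_smul, Complex.add_re, smul_eq_mul, smul_eq_mul,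
    Complex.mul_re, Complex.mul_re]
  simp [Complex.ofReal_re, Complex.ofReal_im]

theorem stmt1 {n : ℕ} (θ : ℝ) (hθ0 : 0 ≤ θ) (hθ1 : θ < Real.pi / 2)
    (A B : Matrix (Fin n) (Fin n) ℂ)
    (hA : sectorClass θ A) (hB : sectorClass θ B)
    (m M : ℝ) (hm : 0 < m) (hmM : m ≤ M)
    (hmA : loewnerLE (m • (1 : Matrix (Fin n) (Fin n) ℂ)) (matRe A))
    (hAM : loewnerLE (matRe A) (M • (1 : Matrix (Fin n) (Fin n) ℂ)))
    (hmB : loewnerLE (m • (1 : Matrix (Fin n) (Fin n) ℂ)) (matRe B))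
    (hBM : loewnerLE (matRe B) (M • (1 : Matrix (Fin n) (Fin n) ℂ)))
    (v : ℝ) (hv0 : 0 ≤ v) (hv1 : v ≤ 1)
    (Φ : Matrix (Fin n) (Fin n) ℂ →ₗ[ℂ] Matrix (Fin n) (Fin n) ℂ)
    (hΦ : IsPosUnitalMap Φ) :
    loewnerLE (matRe (Φ (amean v A B)))
      (((Real.cos θ)⁻¹ ^ 2 * ((M + m) ^ 2 / (4 * m * M))) • matRe (Φ (hmean v A B))) := by
  unfold loewnerLE at hmA hAM hmB hBM ⊢
  unfold IsPosUnitalMap at hΦ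
  have hv1' : (0:ℝ) ≤ 1 - v := by linarith
  have ht : 0 ≤ Real.tan θ := Real.tan_nonneg_of_nonneg_of_le_pi_div_two hθ0 (le_of_lt hθ1)
  have hcos : 0 < Real.cos θ := Real.cos_pos_of_mem_Ioo ⟨by linarith [Real.pi_pos], hθ1⟩
  have hconv : ∀ (r : ℝ) (X : Matrix (Fin n) (Fin n) ℂ), r • X = ((r:ℝ):ℂ) • X := by
    intro r X
    ext i j
    simp [Complex.real_smul]
  rw [hconv] at hmA hAM hmB hBM
  have hRA : (matRe A).PosDef := hA.1
  have hRB : (matRe B).PosDef := hB.1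
  -- the matrix C and its real part
  have hRC : matRe ((v:ℂ) • A⁻¹ + ((1 - v : ℝ):ℂ) • B⁻¹)
      = (v:ℂ) • matRe A⁻¹ + ((1 - v : ℝ):ℂ) • matRe B⁻¹ := matRe_combo v (1-v) A⁻¹ B⁻¹
  have hRCpd : (matRe ((v:ℂ) • A⁻¹ + ((1 - v : ℝ):ℂ) • B⁻¹)).PosDef := by
    rw [hRC]
    exact posDef_combo hv0 hv1 (matRe_inv_posDef hRA) (matRe_inv_posDef hRB)
  set C : Matrix (Fin n) (Fin n) ℂ := (v:ℂ) • A⁻¹ + ((1 - v : ℝ):ℂ) • B⁻¹ with hCdef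
  have hdetC : IsUnit C.det := isUnit_det_of_matRe_posDef hRCpd
  have hRCdet : IsUnit (matRe C).det := (Matrix.isUnit_iff_isUnit_det _).mp hRCpd.isUnit
  -- sector condition for C
  have hsecC : ∀ x, |(star x ⬝ᵥ matIm C *ᵥ x).re|
      ≤ Real.tan θ * (star x ⬝ᵥ matRe C *ᵥ x).re := by
    intro x
    have hIC : matIm C = (v:ℂ) • matIm A⁻¹ + ((1 - v : ℝ):ℂ) • matIm B⁻¹ :=
      matIm_combo v (1-v) A⁻¹ B⁻¹
    rw [hIC, hRC, qf_combo_re, qf_combo_re]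
    have hAx := sector_inv hRA hA.2 x
    have hBx := sector_inv hRB hB.2 x
    calc |v * (star x ⬝ᵥ matIm A⁻¹ *ᵥ x).re + (1-v) * (star x ⬝ᵥ matIm B⁻¹ *ᵥ x).re|
        ≤ |v * (star x ⬝ᵥ matIm A⁻¹ *ᵥ x).re| + |(1-v) * (star x ⬝ᵥ matIm B⁻¹ *ᵥ x).re| :=
          abs_add_le _ _
      _ = v * |(star x ⬝ᵥ matIm A⁻¹ *ᵥ x).re| + (1-v) * |(star x ⬝ᵥ matIm B⁻¹ *ᵥ x).re| := by
          rw [abs_mul, abs_mul, abs_of_nonneg hv0, abs_of_nonneg hv1']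
      _ ≤ v * (Real.tan θ * (star x ⬝ᵥ matRe A⁻¹ *ᵥ x).re)
            + (1-v) * (Real.tan θ * (star x ⬝ᵥ matRe B⁻¹ *ᵥ x).re) :=
          add_le_add (mul_le_mul_of_nonneg_left hAx hv0)
            (mul_le_mul_of_nonneg_left hBx hv1')
      _ = Real.tan θ * (v * (star x ⬝ᵥ matRe A⁻¹ *ᵥ x).re
            + (1-v) * (star x ⬝ᵥ matRe B⁻¹ *ᵥ x).re) := by ring
  -- W
  set W : Matrix (Fin n) (Fin n) ℂ := (v:ℂ) • (matRe A)⁻¹ + ((1 - v : ℝ):ℂ) • (matRe B)⁻¹ with hWdef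
  have hWpd : W.PosDef := posDef_combo hv0 hv1 hRA.inv hRB.inv
  have hWdet : IsUnit W.det := (Matrix.isUnit_iff_isUnit_det _).mp hWpd.isUnit
  -- Step B : W - matRe C is PSD
  have hWRC : (W - matRe C).PosSemidef := by
    have h1 := posSemidef_smul_real (re_inv_diff hRA) hv0
    have h2 := posSemidef_smul_real (re_inv_diff hRB) hv1'
    have h3 := h1.add h2
    have e : (v:ℂ) • ((matRe A)⁻¹ - matRe A⁻¹) + ((1-v:ℝ):ℂ) • ((matRe B)⁻¹ - matRe B⁻¹)
        = W - matRe C := by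
      rw [hWdef, hRC]
      push_cast
      module
    rwa [e] at h3
  -- Step C : (matRe C)⁻¹ - W⁻¹ is PSD
  have hstepC : ((matRe C)⁻¹ - W⁻¹).PosSemidef := inv_antitone hRCpd hWpd hWRC
  -- Step D : matRe (C⁻¹) - cos² θ • (matRe C)⁻¹ is PSD
  have hcongrC : C * (matRe C)⁻¹ * Cᴴ
      = matRe C + matIm C * (matRe C)⁻¹ * matIm C := by
    have e := congr_expand (R := matRe C) (S := matIm C) (X := (matRe C)⁻¹)
      (Matrix.mul_nonsing_inv _ hRCdet) (Matrix.nonsing_inv_mul _ hRCdet)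
    rw [← matRe_add_I_smul C, ← conjTranspose_eq_re_sub C] at e
    exact e
  have hsec_bound := sector_bound hRCpd (matIm_isHermitian C) ht hsecC
  have hscaled := posSemidef_smul_real hsec_bound (sq_nonneg (Real.cos θ))
  have hinner : ((Real.cos θ^2 : ℝ):ℂ) • (((Real.tan θ^2:ℝ):ℂ) • matRe C
        - matIm C * (matRe C)⁻¹ * matIm C)
      = matRe C - ((Real.cos θ^2:ℝ):ℂ) • (matRe C + matIm C * (matRe C)⁻¹ * matIm C) := by
    have hid : (Real.cos θ)^2 * (Real.tan θ)^2 = 1 - (Real.cos θ)^2 := by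
      rw [Real.tan_eq_sin_div_cos]
      field_simp
      linarith [Real.sin_sq_add_cos_sq θ]
    rw [smul_sub, smul_smul, ← Complex.ofReal_mul, hid]
    push_cast
    module
  rw [hinner] at hscaled
  have hstepD : (matRe C⁻¹ - ((Real.cos θ^2:ℝ):ℂ) • (matRe C)⁻¹).PosSemidef := by
    have hsand : C⁻¹ * (C * (matRe C)⁻¹ * Cᴴ) * (C⁻¹)ᴴ = (matRe C)⁻¹ :=
      sandwich_cancel hdetC _
    have e2 : C⁻¹ * (matRe C - ((Real.cos θ^2:ℝ):ℂ) • (matRe C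
          + matIm C * (matRe C)⁻¹ * matIm C)) * (C⁻¹)ᴴ
        = C⁻¹ * matRe C * (C⁻¹)ᴴ - ((Real.cos θ^2:ℝ):ℂ) • (C⁻¹ * (matRe C
          + matIm C * (matRe C)⁻¹ * matIm C) * (C⁻¹)ᴴ) := by
      rw [Matrix.mul_sub, Matrix.sub_mul, Matrix.mul_smul, Matrix.smul_mul]
    have e3 : C⁻¹ * (matRe C + matIm C * (matRe C)⁻¹ * matIm C) * (C⁻¹)ᴴ
        = (matRe C)⁻¹ := by
      rw [← hcongrC]
      exact hsand
    have e4 : matRe C⁻¹ - ((Real.cos θ^2:ℝ):ℂ) • (matRe C)⁻¹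
        = C⁻¹ * (matRe C - ((Real.cos θ^2:ℝ):ℂ) • (matRe C
          + matIm C * (matRe C)⁻¹ * matIm C)) * (C⁻¹)ᴴ := by
      rw [e2, e3, matRe_inv hdetC]
    rw [e4]
    exact hscaled.mul_mul_conjTranspose_same _
  -- Kantorovich
  have k1A := kanto_one hRA hm hmA hAM
  have k1B := kanto_one hRB hm hmB hBM
  have hK1 : (((m+M:ℝ):ℂ) • (1:Matrix (Fin n) (Fin n) ℂ) - ((v:ℂ) • matRe A + ((1-v:ℝ):ℂ) • matRe B)
      - ((m*M:ℝ):ℂ) • W).PosSemidef := by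
    have h1 := posSemidef_smul_real k1A hv0
    have h2 := posSemidef_smul_real k1B hv1'
    have h3 := h1.add h2
    have e : (v:ℂ) • (((m+M:ℝ):ℂ) • (1:Matrix (Fin n) (Fin n) ℂ) - matRe A - ((m*M:ℝ):ℂ) • (matRe A)⁻¹)
        + ((1-v:ℝ):ℂ) • (((m+M:ℝ):ℂ) • (1:Matrix (Fin n) (Fin n) ℂ) - matRe B - ((m*M:ℝ):ℂ) • (matRe B)⁻¹)
        = ((m+M:ℝ):ℂ) • (1:Matrix (Fin n) (Fin n) ℂ) - ((v:ℂ) • matRe A + ((1-v:ℝ):ℂ) • matRe B)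
          - ((m*M:ℝ):ℂ) • W := by
      rw [hWdef]
      push_cast
      module
    rwa [e] at h3
  have hZpd : (W⁻¹).PosDef := hWpd.inv
  have k2 := kanto_two hZpd hm hmM
  rw [Matrix.nonsing_inv_nonsing_inv W hWdet] at k2
  have hK : ((((M+m)^2/(4*m*M) : ℝ):ℂ) • W⁻¹
      - ((v:ℂ) • matRe A + ((1-v:ℝ):ℂ) • matRe B)).PosSemidef := by
    have h3 := hK1.add k2
    have e : (((m+M:ℝ):ℂ) • (1:Matrix (Fin n) (Fin n) ℂ) - ((v:ℂ) • matRe A + ((1-v:ℝ):ℂ) • matRe B)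
          - ((m*M:ℝ):ℂ) • W)
        + (((((M+m)^2/(4*m*M) : ℝ)):ℂ) • W⁻¹ + (((m*M:ℝ)):ℂ) • W
          - (((m+M:ℝ)):ℂ) • (1:Matrix (Fin n) (Fin n) ℂ))
        = (((M+m)^2/(4*m*M) : ℝ):ℂ) • W⁻¹
          - ((v:ℂ) • matRe A + ((1-v:ℝ):ℂ) • matRe B) := by
      module
    rwa [e] at h3
  -- combine C side
  have hCW : (matRe C⁻¹ - ((Real.cos θ^2:ℝ):ℂ) • W⁻¹).PosSemidef := by
    have h1 := posSemidef_smul_real hstepC (sq_nonneg (Real.cos θ))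
    have h2 := hstepD.add h1
    have e : (matRe C⁻¹ - ((Real.cos θ^2:ℝ):ℂ) • (matRe C)⁻¹)
        + ((Real.cos θ^2:ℝ):ℂ) • ((matRe C)⁻¹ - W⁻¹)
        = matRe C⁻¹ - ((Real.cos θ^2:ℝ):ℂ) • W⁻¹ := by
      module
    rwa [e] at h2
  -- scale
  set K : ℝ := (M+m)^2/(4*m*M) with hKdef
  have hM : 0 < M := lt_of_lt_of_le hm hmM
  have hKnn : 0 ≤ K := by
    rw [hKdef]
    exact div_nonneg (sq_nonneg _) (le_of_lt (mul_pos (mul_pos four_pos hm) hM))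
  have hscale := posSemidef_smul_real hCW (show 0 ≤ K / Real.cos θ^2 from
    div_nonneg hKnn (sq_nonneg _))
  have e5 : ((K / Real.cos θ^2 : ℝ):ℂ) • (matRe C⁻¹ - ((Real.cos θ^2:ℝ):ℂ) • W⁻¹)
      = (((Real.cos θ)⁻¹ ^ 2 * K : ℝ):ℂ) • matRe C⁻¹ - ((K:ℝ):ℂ) • W⁻¹ := by
    rw [smul_sub, smul_smul, ← Complex.ofReal_mul]
    have s1 : K / Real.cos θ^2 * Real.cos θ^2 = K :=
      div_mul_cancel₀ _ (pow_ne_zero 2 hcos.ne')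
    have s2 : K / Real.cos θ^2 = (Real.cos θ)⁻¹ ^ 2 * K := by
      rw [inv_pow]
      field_simp
    rw [s1, s2]
  rw [e5] at hscale
  have hfinal : ((((Real.cos θ)⁻¹ ^ 2 * K : ℝ):ℂ) • matRe C⁻¹
      - ((v:ℂ) • matRe A + ((1-v:ℝ):ℂ) • matRe B)).PosSemidef := by
    have h3 := hscale.add hK
    have e : ((((Real.cos θ)⁻¹ ^ 2 * K : ℝ):ℂ) • matRe C⁻¹ - ((K:ℝ):ℂ) • W⁻¹)
        + (((K:ℝ):ℂ) • W⁻¹ - ((v:ℂ) • matRe A + ((1-v:ℝ):ℂ) • matRe B))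
        = (((Real.cos θ)⁻¹ ^ 2 * K : ℝ):ℂ) • matRe C⁻¹
          - ((v:ℂ) • matRe A + ((1-v:ℝ):ℂ) • matRe B) := by
      module
    rwa [e] at h3
  -- apply Φ
  rw [hconv ((Real.cos θ)⁻¹ ^ 2 * K)]
  rw [phi_matRe hΦ, phi_matRe hΦ, ← _root_.map_smul, ← map_sub]
  apply hΦ.2
  have hh : hmean v A B = C⁻¹ := by
    unfold hmean
    rw [← hCdef]
  have ha : matRe (amean v A B) = (v:ℂ) • matRe A + ((1-v:ℝ):ℂ) • matRe B := by
    unfold amean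
    exact matRe_combo v (1-v) A B
  rw [hh, ha]
  exact hfinal
end

section
/- Let 0 ≤ θ < π/2, let A and B be n×n complex matrices in the sector class S_θ, let 0 < m ≤ M with mI ≤ ℜA ≤ MI and mI ≤ ℜB ≤ MI, let v ∈ [0,1], and let Φ be a positive unital linear map on M_n(ℂ). Then ℜ(Φ(A∇_vB)) ≤ K · ℜ(Φ(A!_vB)) in the Loewner order, where K = (M+m)²/(4mM). (This is the case p = 1, σ = !_v of the paper's Theorem comparing the arithmetic mean with any mean between !_v and ∇_v, in which no sec θ factor appears.) -/
open Matrix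
open scoped ComplexOrder

namespace Stmt4Aux
variable {n : ℕ}

lemma qf_conjTranspose (M : Matrix (Fin n) (Fin n) ℂ) (x : Fin n → ℂ) :
    star x ⬝ᵥ Mᴴ *ᵥ x = star (star x ⬝ᵥ M *ᵥ x) := by
  rw [star_dotProduct]
  congr 1
  rw [star_mulVec, conjTranspose_conjTranspose, ← dotProduct_mulVec]

lemma matRe_isHermitian (M : Matrix (Fin n) (Fin n) ℂ) : (matRe M).IsHermitian := by
  unfold Matrix.IsHermitian matRe
  rw [conjTranspose_smul, conjTranspose_add, conjTranspose_conjTranspose]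
  simp [add_comm]

lemma qf_matRe (M : Matrix (Fin n) (Fin n) ℂ) (x : Fin n → ℂ) :
    star x ⬝ᵥ (matRe M) *ᵥ x
      = (2⁻¹ : ℂ) * (star x ⬝ᵥ M *ᵥ x + star (star x ⬝ᵥ M *ᵥ x)) := by
  rw [← qf_conjTranspose]
  unfold matRe
  simp [Matrix.add_mulVec, Matrix.smul_mulVec, mul_add]

lemma isUnit_of_matRe_posDef {M : Matrix (Fin n) (Fin n) ℂ} (h : (matRe M).PosDef) :
    IsUnit M := by
  rw [Matrix.isUnit_iff_isUnit_det, isUnit_iff_ne_zero]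
  intro hdet
  obtain ⟨x, hx, hMx⟩ := Matrix.exists_mulVec_eq_zero_iff.mpr hdet
  have := h.dotProduct_mulVec_pos hx
  rw [qf_matRe, hMx] at this
  simp at this

section Spec
variable {X : Matrix (Fin n) (Fin n) ℂ} (hX : X.IsHermitian)

noncomputable def specFun (f : ℝ → ℝ) : Matrix (Fin n) (Fin n) ℂ :=
  (hX.eigenvectorUnitary : Matrix (Fin n) (Fin n) ℂ) *
    diagonal (fun i => (f (hX.eigenvalues i) : ℂ)) *
    (star hX.eigenvectorUnitary : Matrix (Fin n) (Fin n) ℂ)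

lemma star_mul_self_eigU :
    (star hX.eigenvectorUnitary : Matrix (Fin n) (Fin n) ℂ) *
      (hX.eigenvectorUnitary : Matrix (Fin n) (Fin n) ℂ) = 1 :=
  hX.eigenvectorUnitary.2.1

lemma mul_star_self_eigU :
    (hX.eigenvectorUnitary : Matrix (Fin n) (Fin n) ℂ) *
      (star hX.eigenvectorUnitary : Matrix (Fin n) (Fin n) ℂ) = 1 :=
  hX.eigenvectorUnitary.2.2

lemma specFun_congr {f g : ℝ → ℝ} (h : ∀ i, f (hX.eigenvalues i) = g (hX.eigenvalues i)) :
    specFun hX f = specFun hX g := by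
  unfold specFun
  congr 2
  exact congrArg _ (funext fun i => by rw [h i])

lemma specFun_add (f g : ℝ → ℝ) :
    specFun hX f + specFun hX g = specFun hX (fun t => f t + g t) := by
  unfold specFun
  rw [← add_mul, ← mul_add, diagonal_add]
  congr 2
  funext i
  push_cast
  rfl

lemma specFun_smul (c : ℝ) (f : ℝ → ℝ) :
    (c : ℂ) • specFun hX f = specFun hX (fun t => c * f t) := by
  unfold specFun
  rw [← smul_mul_assoc, ← mul_smul_comm, ← diagonal_smul]
  congr 2
  funext i
  push_cast
  rfl

lemma specFun_mul (f g : ℝ → ℝ) :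
    specFun hX f * specFun hX g = specFun hX (fun t => f t * g t) := by
  unfold specFun
  simp only [mul_assoc]
  rw [← mul_assoc (star hX.eigenvectorUnitary : Matrix (Fin n) (Fin n) ℂ)
      (hX.eigenvectorUnitary : Matrix (Fin n) (Fin n) ℂ), star_mul_self_eigU, one_mul,
    ← mul_assoc (diagonal _) (diagonal _), diagonal_mul_diagonal]
  congr 2
  funext i
  push_cast
  rfl

lemma specFun_id : specFun hX (fun t => t) = X := by
  unfold specFun
  exact (hX.spectral_theorem).symm

lemma specFun_one : specFun hX (fun _ => (1:ℝ)) = 1 := by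
  unfold specFun
  have h : (diagonal (fun _ : Fin n => ((1:ℝ) : ℂ)) : Matrix (Fin n) (Fin n) ℂ) = 1 := by
    simp
  rw [h, mul_one, mul_star_self_eigU]

lemma specFun_const (c : ℝ) : specFun hX (fun _ => c) = (c : ℂ) • 1 := by
  rw [show (fun _ : ℝ => c) = (fun t : ℝ => c * 1) by funext t; ring, ← specFun_smul, specFun_one]

lemma specFun_psd {f : ℝ → ℝ} (h : ∀ i, 0 ≤ f (hX.eigenvalues i)) :
    (specFun hX f).PosSemidef := by
  have hd : (diagonal (fun i => (f (hX.eigenvalues i) : ℂ)) : Matrix (Fin n) (Fin n) ℂ).PosSemidef :=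
    Matrix.PosSemidef.diagonal fun i => Complex.zero_le_real.mpr (h i)
  have := hd.mul_mul_conjTranspose_same (hX.eigenvectorUnitary : Matrix (Fin n) (Fin n) ℂ)
  rw [← Matrix.star_eq_conjTranspose] at this
  exact this

lemma psd_of_specFun {f : ℝ → ℝ} (h : (specFun hX f).PosSemidef) :
    ∀ i, 0 ≤ f (hX.eigenvalues i) := by
  intro i
  have h2 := h.conjTranspose_mul_mul_same (hX.eigenvectorUnitary : Matrix (Fin n) (Fin n) ℂ)
  unfold specFun at h2
  rw [Matrix.star_eq_conjTranspose] at h2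
  rw [show ∀ U D : Matrix (Fin n) (Fin n) ℂ, Uᴴ * (U * D * Uᴴ) * U = (Uᴴ * U) * D * (Uᴴ * U) by
    intro U D; simp only [mul_assoc]] at h2
  rw [← Matrix.star_eq_conjTranspose, star_mul_self_eigU, one_mul, mul_one] at h2
  have := (Matrix.posSemidef_diagonal_iff.mp h2) i
  exact Complex.zero_le_real.mp this

lemma specFun_inv (h : ∀ i, hX.eigenvalues i ≠ 0) :
    X⁻¹ = specFun hX (fun t => t⁻¹) := by
  apply Matrix.inv_eq_right_inv
  nth_rewrite 1 [← specFun_id hX]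
  rw [specFun_mul, specFun_congr hX (g := fun _ => (1:ℝ)) (fun i => mul_inv_cancel₀ (h i)),
    specFun_one]

end Spec


section Helpers
variable {P Q X Y Z : Matrix (Fin n) (Fin n) ℂ}

lemma real_smul_eq (r : ℝ) (A : Matrix (Fin n) (Fin n) ℂ) : r • A = (r : ℂ) • A := by
  ext i j
  simp [Complex.real_smul]

lemma psd_smul {c : ℝ} (hc : 0 ≤ c) (h : P.PosSemidef) : ((c : ℂ) • P).PosSemidef := by
  refine PosSemidef.of_dotProduct_mulVec_nonneg ?_ ?_
  · unfold Matrix.IsHermitian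
    rw [conjTranspose_smul, h.1.eq, Complex.star_def, Complex.conj_ofReal]
  · intro x
    rw [Matrix.smul_mulVec, dotProduct_smul, smul_eq_mul]
    exact mul_nonneg (Complex.zero_le_real.mpr hc) (h.dotProduct_mulVec_nonneg x)

lemma psd_add_mem (h1 : P.PosSemidef) (h2 : Q.PosSemidef) : (P + Q).PosSemidef :=
  Matrix.PosSemidef.add h1 h2

end Helpers

section QfInv
variable {A P Q : Matrix (Fin n) (Fin n) ℂ}

lemma matRe_smul_real (r : ℝ) (A : Matrix (Fin n) (Fin n) ℂ) :
    matRe ((r : ℂ) • A) = (r : ℂ) • matRe A := by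
  unfold matRe
  rw [conjTranspose_smul, Complex.star_def, Complex.conj_ofReal, ← smul_add, smul_comm]

lemma matRe_add (A B : Matrix (Fin n) (Fin n) ℂ) : matRe (A + B) = matRe A + matRe B := by
  unfold matRe
  rw [conjTranspose_add]
  module

/-- quadratic form of `matRe` of an inverse -/
lemma qf_matRe_inv (hdet : IsUnit A.det) (x : Fin n → ℂ) :
    star x ⬝ᵥ (matRe A⁻¹) *ᵥ x = star (A⁻¹ *ᵥ x) ⬝ᵥ (matRe A) *ᵥ (A⁻¹ *ᵥ x) := by
  set w := A⁻¹ *ᵥ x with hw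
  have hx : A *ᵥ w = x := by
    rw [hw, Matrix.mulVec_mulVec, Matrix.mul_nonsing_inv _ hdet, Matrix.one_mulVec]
  have key : star x ⬝ᵥ A⁻¹ *ᵥ x = star w ⬝ᵥ Aᴴ *ᵥ w := by
    rw [← hw, ← hx]
    rw [Matrix.star_mulVec, ← dotProduct_mulVec]
  rw [qf_matRe, qf_matRe, key, qf_conjTranspose, star_star, add_comm]

lemma matRe_inv_posDef (h : (matRe A).PosDef) : (matRe A⁻¹).PosDef := by
  have hdet : IsUnit A.det := (Matrix.isUnit_iff_isUnit_det _).mp (isUnit_of_matRe_posDef h)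
  refine PosDef.of_dotProduct_mulVec_pos (matRe_isHermitian _) fun x hx => ?_
  rw [qf_matRe_inv hdet]
  apply h.dotProduct_mulVec_pos
  intro h0
  apply hx
  have := congrArg (A *ᵥ ·) h0
  simpa [Matrix.mulVec_mulVec, Matrix.mul_nonsing_inv _ hdet] using this

lemma posDef_convex (hP : P.PosDef) (hQ : Q.PosDef) {v : ℝ} (h0 : 0 ≤ v) (h1 : v ≤ 1) :
    ((v : ℂ) • P + ((1 - v : ℝ) : ℂ) • Q).PosDef := by
  have hH : ((v : ℂ) • P + ((1 - v : ℝ) : ℂ) • Q).IsHermitian := by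
    unfold Matrix.IsHermitian
    rw [conjTranspose_add, conjTranspose_smul, conjTranspose_smul, hP.1.eq, hQ.1.eq]
    simp only [Complex.star_def, Complex.conj_ofReal]
  refine PosDef.of_dotProduct_mulVec_pos hH fun x hx => ?_
  rw [Matrix.add_mulVec, dotProduct_add, Matrix.smul_mulVec, Matrix.smul_mulVec,
    dotProduct_smul, dotProduct_smul, smul_eq_mul, smul_eq_mul]
  rcases eq_or_lt_of_le h0 with h | h
  · rw [← h]
    simp only [Complex.ofReal_zero, zero_mul, zero_add, sub_zero, Complex.ofReal_one, one_mul]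
    exact hQ.dotProduct_mulVec_pos hx
  · have t1 : 0 < (v : ℂ) * (star x ⬝ᵥ P *ᵥ x) :=
      mul_pos (Complex.zero_lt_real.mpr h) (hP.dotProduct_mulVec_pos hx)
    have t2 : 0 ≤ ((1 - v : ℝ) : ℂ) * (star x ⬝ᵥ Q *ᵥ x) :=
      mul_nonneg (Complex.zero_le_real.mpr (by linarith)) (hQ.posSemidef.dotProduct_mulVec_nonneg x)
    exact add_pos_of_pos_of_nonneg t1 t2

end QfInv

section Kant
variable {X H : Matrix (Fin n) (Fin n) ℂ} {m M : ℝ}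

lemma specFun_sub {X : Matrix (Fin n) (Fin n) ℂ} (hX : X.IsHermitian) (f g : ℝ → ℝ) :
    specFun hX f - specFun hX g = specFun hX (fun t => f t - g t) := by
  unfold specFun
  rw [← sub_mul, ← mul_sub, diagonal_sub]
  congr 2
  funext i
  push_cast
  rfl

lemma eig_lb (hX : X.IsHermitian) (h : (X - m • 1).PosSemidef) : ∀ i, m ≤ hX.eigenvalues i := by
  have hE : specFun hX (fun t => t - m) = X - m • (1 : Matrix (Fin n) (Fin n) ℂ) := by
    rw [← specFun_sub, specFun_id, specFun_const, real_smul_eq]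
  intro i
  have := psd_of_specFun hX (by rw [hE]; exact h) i
  linarith

lemma eig_ub (hX : X.IsHermitian) (h : (M • 1 - X).PosSemidef) : ∀ i, hX.eigenvalues i ≤ M := by
  have hE : specFun hX (fun t => M - t) = M • (1 : Matrix (Fin n) (Fin n) ℂ) - X := by
    rw [← specFun_sub, specFun_id, specFun_const, real_smul_eq]
  intro i
  have := psd_of_specFun hX (by rw [hE]; exact h) i
  linarith

lemma threeA (hX : X.IsHermitian) (hm0 : 0 < m)
    (h1 : (X - m • 1).PosSemidef) (h2 : (M • 1 - X).PosSemidef) :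
    (((m + M : ℝ) : ℂ) • 1 - X - ((m * M : ℝ) : ℂ) • X⁻¹).PosSemidef := by
  have hlb := eig_lb hX h1
  have hub := eig_ub hX h2
  have hne : ∀ i, hX.eigenvalues i ≠ 0 := fun i => ne_of_gt (lt_of_lt_of_le hm0 (hlb i))
  have hexp : specFun hX (fun t => (m + M) - t - m * M * t⁻¹)
      = ((m + M : ℝ) : ℂ) • 1 - X - ((m * M : ℝ) : ℂ) • X⁻¹ := by
    rw [← specFun_sub, ← specFun_sub, specFun_const, specFun_id, ← specFun_smul,
      ← specFun_inv hX hne]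
  rw [← hexp]
  apply specFun_psd
  intro i
  set t := hX.eigenvalues i with ht
  have htpos : 0 < t := lt_of_lt_of_le hm0 (hlb i)
  have key : (m + M) - t - m * M * t⁻¹ = (t - m) * (M - t) / t := by
    field_simp
    ring
  rw [key]
  have h1' : 0 ≤ t - m := by linarith [hlb i]
  have h2' : 0 ≤ M - t := by linarith [hub i]
  exact div_nonneg (mul_nonneg h1' h2') htpos.le

lemma threeB (hH : H.PosDef) (hm0 : 0 < m) (hmM : m ≤ M) :
    ((((M + m) ^ 2 / (4 * m * M) : ℝ) : ℂ) • H + ((m * M : ℝ) : ℂ) • H⁻¹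
      - ((m + M : ℝ) : ℂ) • 1).PosSemidef := by
  have hX : H.IsHermitian := hH.1
  have hpos : ∀ i, 0 < hX.eigenvalues i := fun i => hH.eigenvalues_pos i
  have hne : ∀ i, hX.eigenvalues i ≠ 0 := fun i => ne_of_gt (hpos i)
  have hM0 : 0 < M := lt_of_lt_of_le hm0 hmM
  have hexp : specFun hX (fun t => (M + m) ^ 2 / (4 * m * M) * t + m * M * t⁻¹ - (m + M))
      = (((M + m) ^ 2 / (4 * m * M) : ℝ) : ℂ) • H + ((m * M : ℝ) : ℂ) • H⁻¹
        - ((m + M : ℝ) : ℂ) • 1 := by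
    rw [← specFun_sub, ← specFun_add, ← specFun_smul, ← specFun_smul, specFun_const,
      specFun_id, ← specFun_inv hX hne]
  rw [← hexp]
  apply specFun_psd
  intro i
  set t := hX.eigenvalues i with ht
  have htpos : 0 < t := hpos i
  have key : (M + m) ^ 2 / (4 * m * M) * t + m * M * t⁻¹ - (m + M)
      = ((M + m) * t - 2 * m * M) ^ 2 / (4 * m * M * t) := by
    field_simp
    ring
  rw [key]
  positivity

lemma step3 {RA RB : Matrix (Fin n) (Fin n) ℂ} (hRA : RA.PosDef) (hRB : RB.PosDef)
    {m M v : ℝ} (hm0 : 0 < m) (hmM : m ≤ M) (h0 : 0 ≤ v) (h1 : v ≤ 1)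
    (hA1 : (RA - m • 1).PosSemidef) (hA2 : (M • 1 - RA).PosSemidef)
    (hB1 : (RB - m • 1).PosSemidef) (hB2 : (M • 1 - RB).PosSemidef) :
    ((((M + m) ^ 2 / (4 * m * M) : ℝ) : ℂ) • ((v : ℂ) • RA⁻¹ + ((1 - v : ℝ) : ℂ) • RB⁻¹)⁻¹
      - ((v : ℂ) • RA + ((1 - v : ℝ) : ℂ) • RB)).PosSemidef := by
  set P := (v : ℂ) • RA⁻¹ + ((1 - v : ℝ) : ℂ) • RB⁻¹ with hPdef
  have hPpos : P.PosDef := posDef_convex hRA.inv hRB.inv h0 h1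
  have hHpos : P⁻¹.PosDef := hPpos.inv
  have hPinv : (P⁻¹)⁻¹ = P :=
    Matrix.nonsing_inv_nonsing_inv _ ((Matrix.isUnit_iff_isUnit_det _).mp hPpos.isUnit)
  have tA := threeA hRA.1 hm0 hA1 hA2
  have tB := threeA hRB.1 hm0 hB1 hB2
  have tH := threeB hHpos hm0 hmM
  have sum := psd_add_mem (psd_add_mem (psd_smul h0 tA)
    (psd_smul (by linarith : (0:ℝ) ≤ 1 - v) tB)) tH
  have hiden : (v : ℂ) • (((m + M : ℝ) : ℂ) • 1 - RA - ((m * M : ℝ) : ℂ) • RA⁻¹)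
      + ((1 - v : ℝ) : ℂ) • (((m + M : ℝ) : ℂ) • 1 - RB - ((m * M : ℝ) : ℂ) • RB⁻¹)
      + ((((M + m) ^ 2 / (4 * m * M) : ℝ) : ℂ) • P⁻¹ + ((m * M : ℝ) : ℂ) • (P⁻¹)⁻¹
        - ((m + M : ℝ) : ℂ) • 1)
      = (((M + m) ^ 2 / (4 * m * M) : ℝ) : ℂ) • P⁻¹
        - ((v : ℂ) • RA + ((1 - v : ℝ) : ℂ) • RB) := by
    rw [hPinv, hPdef]
    push_cast
    module
  rw [hiden] at sum
  exact sum

end Kant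


section Step2
variable {R S : Matrix (Fin n) (Fin n) ℂ}

/-- The variational property of the weighted harmonic mean of Hermitian positive matrices. -/
lemma herm_min (hR : R.PosDef) (hS : S.PosDef) {v : ℝ} (h0 : 0 ≤ v) (h1 : v ≤ 1)
    (x y z : Fin n → ℂ) (hxyz : (v : ℂ) • y + ((1 - v : ℝ) : ℂ) • z = x) :
    star x ⬝ᵥ (((v : ℂ) • R⁻¹ + ((1 - v : ℝ) : ℂ) • S⁻¹)⁻¹ *ᵥ x)
      ≤ (v : ℂ) * (star y ⬝ᵥ R *ᵥ y) + ((1 - v : ℝ) : ℂ) * (star z ⬝ᵥ S *ᵥ z) := by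
  have hRdet : IsUnit R.det := (Matrix.isUnit_iff_isUnit_det _).mp hR.isUnit
  have hSdet : IsUnit S.det := (Matrix.isUnit_iff_isUnit_det _).mp hS.isUnit
  set P := (v : ℂ) • R⁻¹ + ((1 - v : ℝ) : ℂ) • S⁻¹ with hPdef
  have hPpos : P.PosDef := posDef_convex hR.inv hS.inv h0 h1
  have hPdet : IsUnit P.det := (Matrix.isUnit_iff_isUnit_det _).mp hPpos.isUnit
  set u := P⁻¹ *ᵥ x with hu
  set y0 := R⁻¹ *ᵥ u with hy0
  set z0 := S⁻¹ *ᵥ u with hz0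
  have hRy0 : R *ᵥ y0 = u := by
    rw [hy0, Matrix.mulVec_mulVec, Matrix.mul_nonsing_inv _ hRdet, Matrix.one_mulVec]
  have hSz0 : S *ᵥ z0 = u := by
    rw [hz0, Matrix.mulVec_mulVec, Matrix.mul_nonsing_inv _ hSdet, Matrix.one_mulVec]
  have hx0 : (v : ℂ) • y0 + ((1 - v : ℝ) : ℂ) • z0 = x := by
    rw [hy0, hz0, ← Matrix.smul_mulVec, ← Matrix.smul_mulVec, ← Matrix.add_mulVec,
      ← hPdef, hu, Matrix.mulVec_mulVec, Matrix.mul_nonsing_inv _ hPdet, Matrix.one_mulVec]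
  -- expansions of the two "remainder" quadratic forms
  have expand : ∀ (T : Matrix (Fin n) (Fin n) ℂ) (w w0 : Fin n → ℂ), T.IsHermitian →
      T *ᵥ w0 = u →
      star (w - w0) ⬝ᵥ T *ᵥ (w - w0)
        = star w ⬝ᵥ T *ᵥ w - star w ⬝ᵥ u - star u ⬝ᵥ w + star w0 ⬝ᵥ u := by
    intro T w w0 hT hTw0
    have h3 : star w0 ⬝ᵥ T *ᵥ w = star u ⬝ᵥ w := by
      rw [dotProduct_mulVec, ← hT.eq, ← Matrix.star_mulVec, hTw0]
    rw [Matrix.mulVec_sub, star_sub, sub_dotProduct, dotProduct_sub, dotProduct_sub, hTw0, h3]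
    ring
  have eY := expand R y y0 hR.1 hRy0
  have eZ := expand S z z0 hS.1 hSz0
  -- the scalar `star x ⬝ᵥ u` expressed three ways
  have e1 : star x ⬝ᵥ u = (v : ℂ) * (star y ⬝ᵥ u) + ((1 - v : ℝ) : ℂ) * (star z ⬝ᵥ u) := by
    rw [← hxyz]
    simp [add_dotProduct, smul_dotProduct, star_add, star_smul, Complex.conj_ofReal]
  have e2 : star x ⬝ᵥ u = (v : ℂ) * (star y0 ⬝ᵥ u) + ((1 - v : ℝ) : ℂ) * (star z0 ⬝ᵥ u) := by
    rw [← hx0]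
    simp [add_dotProduct, smul_dotProduct, star_add, star_smul, Complex.conj_ofReal]
  have e3 : star u ⬝ᵥ x = (v : ℂ) * (star u ⬝ᵥ y) + ((1 - v : ℝ) : ℂ) * (star u ⬝ᵥ z) := by
    rw [← hxyz]
    simp [dotProduct_add, dotProduct_smul]
  have hux : star u ⬝ᵥ x = star x ⬝ᵥ u := by
    have hh : star x ⬝ᵥ u = star x ⬝ᵥ P⁻¹ *ᵥ x := rfl
    rw [star_dotProduct, hh, ← qf_conjTranspose, hPpos.inv.1.eq]
  have key : (v : ℂ) * (star y ⬝ᵥ R *ᵥ y) + ((1 - v : ℝ) : ℂ) * (star z ⬝ᵥ S *ᵥ z)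
      - star x ⬝ᵥ (P⁻¹ *ᵥ x)
      = (v : ℂ) * (star (y - y0) ⬝ᵥ R *ᵥ (y - y0))
        + ((1 - v : ℝ) : ℂ) * (star (z - z0) ⬝ᵥ S *ᵥ (z - z0)) := by
    rw [eY, eZ, ← hu]
    linear_combination -e1 + e2 - e3 + hux
  have hrem : 0 ≤ (v : ℂ) * (star (y - y0) ⬝ᵥ R *ᵥ (y - y0))
      + ((1 - v : ℝ) : ℂ) * (star (z - z0) ⬝ᵥ S *ᵥ (z - z0)) :=
    add_nonneg (mul_nonneg (Complex.zero_le_real.mpr h0) (hR.posSemidef.dotProduct_mulVec_nonneg _))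
      (mul_nonneg (Complex.zero_le_real.mpr (by linarith)) (hS.posSemidef.dotProduct_mulVec_nonneg _))
  rw [← sub_nonneg, key]
  exact hrem

/-- Step 2: `matRe` of the harmonic mean of sectorial matrices dominates the harmonic
mean of the real parts. -/
lemma step2 {A B : Matrix (Fin n) (Fin n) ℂ}
    (hA : (matRe A).PosDef) (hB : (matRe B).PosDef) {v : ℝ} (h0 : 0 ≤ v) (h1 : v ≤ 1) :
    (matRe (hmean v A B)
      - ((v : ℂ) • (matRe A)⁻¹ + ((1 - v : ℝ) : ℂ) • (matRe B)⁻¹)⁻¹).PosSemidef := by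
  have hAdet : IsUnit A.det := (Matrix.isUnit_iff_isUnit_det _).mp (isUnit_of_matRe_posDef hA)
  have hBdet : IsUnit B.det := (Matrix.isUnit_iff_isUnit_det _).mp (isUnit_of_matRe_posDef hB)
  set C := (v : ℂ) • A⁻¹ + ((1 - v : ℝ) : ℂ) • B⁻¹ with hCdef
  have hReC : matRe C = (v : ℂ) • matRe A⁻¹ + ((1 - v : ℝ) : ℂ) • matRe B⁻¹ := by
    rw [hCdef, matRe_add, matRe_smul_real, matRe_smul_real]
  have hCre : (matRe C).PosDef := by
    rw [hReC]
    exact posDef_convex (matRe_inv_posDef hA) (matRe_inv_posDef hB) h0 h1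
  have hCdet : IsUnit C.det := (Matrix.isUnit_iff_isUnit_det _).mp (isUnit_of_matRe_posDef hCre)
  set HH := ((v : ℂ) • (matRe A)⁻¹ + ((1 - v : ℝ) : ℂ) • (matRe B)⁻¹)⁻¹ with hHH
  have hHHpos : HH.PosDef := (posDef_convex hA.inv hB.inv h0 h1).inv
  refine PosSemidef.of_dotProduct_mulVec_nonneg ?_ ?_
  · exact Matrix.IsHermitian.sub (matRe_isHermitian _) hHHpos.1
  intro x
  rw [Matrix.sub_mulVec, dotProduct_sub]
  rw [sub_nonneg]
  set w := C⁻¹ *ᵥ x with hw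
  set y := A⁻¹ *ᵥ w with hy
  set z := B⁻¹ *ᵥ w with hz
  have hcomb : (v : ℂ) • y + ((1 - v : ℝ) : ℂ) • z = x := by
    rw [hy, hz, ← Matrix.smul_mulVec, ← Matrix.smul_mulVec, ← Matrix.add_mulVec,
      ← hCdef, hw, Matrix.mulVec_mulVec, Matrix.mul_nonsing_inv _ hCdet, Matrix.one_mulVec]
  have claim1 : star x ⬝ᵥ (matRe (hmean v A B)) *ᵥ x
      = (v : ℂ) * (star y ⬝ᵥ (matRe A) *ᵥ y) + ((1 - v : ℝ) : ℂ) * (star z ⬝ᵥ (matRe B) *ᵥ z) := by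
    have s1 : star x ⬝ᵥ (matRe (hmean v A B)) *ᵥ x = star w ⬝ᵥ (matRe C) *ᵥ w := by
      unfold hmean
      rw [← hCdef, qf_matRe_inv hCdet, ← hw]
    have s2 : star w ⬝ᵥ (matRe C) *ᵥ w
        = (v : ℂ) * (star w ⬝ᵥ (matRe A⁻¹) *ᵥ w) + ((1 - v : ℝ) : ℂ) * (star w ⬝ᵥ (matRe B⁻¹) *ᵥ w) := by
      rw [hReC, Matrix.add_mulVec, dotProduct_add, Matrix.smul_mulVec,
        Matrix.smul_mulVec, dotProduct_smul, dotProduct_smul, smul_eq_mul, smul_eq_mul]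
    rw [s1, s2, qf_matRe_inv hAdet, qf_matRe_inv hBdet, ← hy, ← hz]
  rw [claim1]
  exact herm_min hA hB h0 h1 x y z hcomb

end Step2



section Phi
variable {Φ : Matrix (Fin n) (Fin n) ℂ →ₗ[ℂ] Matrix (Fin n) (Fin n) ℂ}
  (hΦ : ∀ X : Matrix (Fin n) (Fin n) ℂ, X.PosSemidef → (Φ X).PosSemidef)

lemma herm_decomp {X : Matrix (Fin n) (Fin n) ℂ} (hX : X.IsHermitian) :
    ∃ P Q : Matrix (Fin n) (Fin n) ℂ, P.PosSemidef ∧ Q.PosSemidef ∧ X = P - Q := by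
  refine ⟨specFun hX (fun t => max t 0), specFun hX (fun t => max (-t) 0),
    specFun_psd hX (fun i => le_max_right _ _), specFun_psd hX (fun i => le_max_right _ _), ?_⟩
  rw [specFun_sub hX,
    show (fun t : ℝ => max t 0 - max (-t) 0) = fun t : ℝ => t from
      funext fun t => max_zero_sub_max_neg_zero_eq_self t]
  exact (specFun_id hX).symm

lemma matIm_isHermitian (X : Matrix (Fin n) (Fin n) ℂ) : (matIm X).IsHermitian := by
  unfold Matrix.IsHermitian matIm
  rw [conjTranspose_smul, conjTranspose_sub, conjTranspose_conjTranspose]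
  have hst : star ((2 * Complex.I)⁻¹) = -(2 * Complex.I)⁻¹ := by
    rw [Complex.star_def, map_inv₀, _root_.map_mul, Complex.conj_I, mul_neg, inv_neg]
    norm_num [Complex.ext_iff]
  rw [hst, neg_smul, ← smul_neg, neg_sub]

include hΦ

lemma phi_herm {X : Matrix (Fin n) (Fin n) ℂ} (hX : X.IsHermitian) : (Φ X).IsHermitian := by
  obtain ⟨P, Q, hP, hQ, rfl⟩ := herm_decomp hX
  rw [map_sub]
  exact (hΦ P hP).1.sub (hΦ Q hQ).1

lemma phi_conjT (X : Matrix (Fin n) (Fin n) ℂ) : Φ Xᴴ = (Φ X)ᴴ := by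
  have hIi : Complex.I * (2 * Complex.I)⁻¹ = 2⁻¹ := by
    rw [mul_inv, Complex.inv_I]
    have := Complex.I_mul_I
    field_simp
    rw [sq, this, neg_neg]
  have hre : matRe X + Complex.I • matIm X = X := by
    unfold matRe matIm
    rw [smul_smul, hIi]
    module
  have hconj : matRe X - Complex.I • matIm X = Xᴴ := by
    unfold matRe matIm
    rw [smul_smul, hIi]
    module
  have h1 : Φ Xᴴ = Φ (matRe X) - Complex.I • Φ (matIm X) := by
    rw [← hconj, map_sub, _root_.map_smul]
  have h2 : (Φ X)ᴴ = Φ (matRe X) - Complex.I • Φ (matIm X) := by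
    nth_rewrite 1 [← hre]
    rw [map_add, _root_.map_smul, conjTranspose_add, conjTranspose_smul,
      (phi_herm hΦ (matRe_isHermitian X)).eq, (phi_herm hΦ (matIm_isHermitian X)).eq,
      Complex.star_def, Complex.conj_I, neg_smul, ← sub_eq_add_neg]
  rw [h1, h2]

lemma matRe_phi (X : Matrix (Fin n) (Fin n) ℂ) : matRe (Φ X) = Φ (matRe X) := by
  unfold matRe
  rw [← phi_conjT hΦ, ← map_add, ← _root_.map_smul]

end Phi
end Stmt4Aux

open Stmt4Aux in
theorem stmt4 {n : ℕ} (θ : ℝ) (hθ0 : 0 ≤ θ) (hθ1 : θ < Real.pi / 2)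
    (A B : Matrix (Fin n) (Fin n) ℂ)
    (hA : sectorClass θ A) (hB : sectorClass θ B)
    (m M : ℝ) (hm : 0 < m) (hmM : m ≤ M)
    (hmA : loewnerLE (m • (1 : Matrix (Fin n) (Fin n) ℂ)) (matRe A))
    (hAM : loewnerLE (matRe A) (M • (1 : Matrix (Fin n) (Fin n) ℂ)))
    (hmB : loewnerLE (m • (1 : Matrix (Fin n) (Fin n) ℂ)) (matRe B))
    (hBM : loewnerLE (matRe B) (M • (1 : Matrix (Fin n) (Fin n) ℂ)))
    (v : ℝ) (hv0 : 0 ≤ v) (hv1 : v ≤ 1)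
    (Φ : Matrix (Fin n) (Fin n) ℂ →ₗ[ℂ] Matrix (Fin n) (Fin n) ℂ)
    (hΦ : IsPosUnitalMap Φ) :
    loewnerLE (matRe (Φ (amean v A B)))
      (((M + m) ^ 2 / (4 * m * M)) • matRe (Φ (hmean v A B))) := by
  obtain ⟨hΦ1, hΦpos⟩ := hΦ
  have hM0 : 0 < M := lt_of_lt_of_le hm hmM
  have hK0 : (0:ℝ) ≤ (M + m) ^ 2 / (4 * m * M) := by positivity
  have s3 := step3 hA.1 hB.1 hm hmM hv0 hv1 hmA hAM hmB hBM
  have s2 := step2 hA.1 hB.1 hv0 hv1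
  set HH := ((v : ℂ) • (matRe A)⁻¹ + ((1 - v : ℝ) : ℂ) • (matRe B)⁻¹)⁻¹ with hHH
  set K : ℝ := (M + m) ^ 2 / (4 * m * M) with hK
  have s2' : ((K:ℂ) • matRe (hmean v A B) - (K:ℂ) • HH).PosSemidef := by
    rw [← smul_sub]
    exact psd_smul hK0 s2
  have comb : ((K:ℂ) • matRe (hmean v A B)
      - ((v:ℂ) • matRe A + ((1 - v : ℝ):ℂ) • matRe B)).PosSemidef := by
    have h := psd_add_mem s2' s3
    rwa [sub_add_sub_cancel] at h
  have final : (Φ ((K:ℂ) • matRe (hmean v A B))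
      - Φ ((v:ℂ) • matRe A + ((1 - v : ℝ):ℂ) • matRe B)).PosSemidef := by
    rw [← map_sub]
    exact hΦpos _ comb
  show (K • matRe (Φ (hmean v A B)) - matRe (Φ (amean v A B))).PosSemidef
  rw [real_smul_eq, matRe_phi hΦpos, matRe_phi hΦpos,
    show matRe (amean v A B) = (v:ℂ) • matRe A + ((1 - v : ℝ):ℂ) • matRe B from by
      unfold amean; rw [matRe_add, matRe_smul_real, matRe_smul_real],
    ← _root_.map_smul]
  exact final
end
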